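/- arXiv:2012.06783 — 2 statements merged into one kernel-verified Lean document; each statement's English description precedes it below -/
import Mathlib

section
/- Let 1 ≤ q < p < ∞. Let X be a real Banach space with an unconditional basis (e_n)_{n∈ℕ} satisfying a lower q-estimate and Y a real Banach space with an unconditional basis (y_n)_{n∈ℕ} satisfying an upper q-estimate. Then the product X × Y (with the sup norm) contains an isomorphic copy of ℓ_p if and only if Y contains an isomorphic copy of ℓ_p. -/
open scoped BigOperators

/-- `e` is a Schauder basis of `X`: every vector has a unique expansion as a norm-convergent
series `∑ n, a n • e n` (partial sums over `Finset.range N`). -/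
def IsSchauderBasis {X : Type*} [NormedAddCommGroup X] [NormedSpace ℝ X] (e : ℕ → X) : Prop :=
  ∀ x : X, ∃! a : ℕ → ℝ,
    Filter.Tendsto (fun N => ∑ n ∈ Finset.range N, a n • e n) Filter.atTop (nhds x)

/-- `u` is a block basic sequence with respect to `e`. -/
def IsBlockBasic {X : Type*} [NormedAddCommGroup X] [NormedSpace ℝ X]
    (e : ℕ → X) (u : ℕ → X) : Prop :=
  ∃ (A : ℕ → Finset ℕ) (a : ℕ → ℝ),
    (∀ j, (A j).Nonempty) ∧
    (∀ j, ∀ m ∈ A j, ∀ k ∈ A (j + 1), m < k) ∧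
    (∀ j, u j = ∑ n ∈ A j, a n • e n)

/-- A sequence is semi-normalized if its norms are bounded away from zero and from infinity. -/
def SemiNormalized {X : Type*} [NormedAddCommGroup X] (u : ℕ → X) : Prop :=
  ∃ c C : ℝ, 0 < c ∧ ∀ j, c ≤ ‖u j‖ ∧ ‖u j‖ ≤ C

/-- Two sequences (possibly in different spaces) are equivalent. -/
def SeqEquiv {X Y : Type*} [NormedAddCommGroup X] [NormedSpace ℝ X]
    [NormedAddCommGroup Y] [NormedSpace ℝ Y] (u : ℕ → X) (w : ℕ → Y) : Prop :=
  ∃ C : ℝ, 1 ≤ C ∧ ∀ (a : ℕ → ℝ) (s : Finset ℕ),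
    C⁻¹ * ‖∑ j ∈ s, a j • w j‖ ≤ ‖∑ j ∈ s, a j • u j‖ ∧
    ‖∑ j ∈ s, a j • u j‖ ≤ C * ‖∑ j ∈ s, a j • w j‖

/-- A bounded linear operator is compact if the image of the closed unit ball is
relatively compact. -/
def CompactOp {X Y : Type*} [NormedAddCommGroup X] [NormedSpace ℝ X]
    [NormedAddCommGroup Y] [NormedSpace ℝ Y] (T : Y →L[ℝ] X) : Prop :=
  IsCompact (closure (T '' Metric.closedBall 0 1))

/-- `e` is an unconditional basis of `X`. -/
def IsUncondBasis {X : Type*} [NormedAddCommGroup X] [NormedSpace ℝ X] (e : ℕ → X) : Prop :=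
  (∀ n, e n ≠ 0) ∧ ∀ x : X, ∃! a : ℕ → ℝ, HasSum (fun n => a n • e n) x

/-- `u` is disjointly finitely supported with respect to `e`. -/
def DisjSupported {X : Type*} [NormedAddCommGroup X] [NormedSpace ℝ X]
    (e : ℕ → X) (u : ℕ → X) : Prop :=
  ∃ A : ℕ → Finset ℕ, Pairwise (Function.onFun Disjoint A) ∧
    ∀ j, u j ∈ Submodule.span ℝ (e '' (A j : Set ℕ))

/-- The basis `e` satisfies a lower `q`-estimate. -/
def LowerEstimate {X : Type*} [NormedAddCommGroup X] [NormedSpace ℝ X]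
    (e : ℕ → X) (q : ℝ) : Prop :=
  ∃ C : ℝ, 0 < C ∧ ∀ (m : ℕ) (f : Fin m → X) (A : Fin m → Finset ℕ),
    Pairwise (Function.onFun Disjoint A) →
    (∀ i, f i ∈ Submodule.span ℝ (e '' (A i : Set ℕ))) →
    (∑ i, ‖f i‖ ^ q) ^ (1 / q) ≤ C * ‖∑ i, f i‖

/-- The basis `e` satisfies an upper `q`-estimate. -/
def UpperEstimate {X : Type*} [NormedAddCommGroup X] [NormedSpace ℝ X]
    (e : ℕ → X) (q : ℝ) : Prop :=
  ∃ C : ℝ, 0 < C ∧ ∀ (m : ℕ) (f : Fin m → X) (A : Fin m → Finset ℕ),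
    Pairwise (Function.onFun Disjoint A) →
    (∀ i, f i ∈ Submodule.span ℝ (e '' (A i : Set ℕ))) →
    ‖∑ i, f i‖ ≤ C * (∑ i, ‖f i‖ ^ q) ^ (1 / q)

/-- `u` is equivalent to the canonical basis of `ℓ_q`. -/
def EquivCanonLq {X : Type*} [NormedAddCommGroup X] [NormedSpace ℝ X]
    (u : ℕ → X) (q : ℝ) : Prop :=
  ∃ C : ℝ, 1 ≤ C ∧ ∀ (a : ℕ → ℝ) (s : Finset ℕ),
    C⁻¹ * (∑ j ∈ s, |a j| ^ q) ^ (1 / q) ≤ ‖∑ j ∈ s, a j • u j‖ ∧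
    ‖∑ j ∈ s, a j • u j‖ ≤ C * (∑ j ∈ s, |a j| ^ q) ^ (1 / q)

/-- `Z` contains an isomorphic copy of `ℓ_q`: there is a bounded linear map `J : ℓ_q → Z`
which is bounded below. -/
def ContainsLp (Z : Type*) [NormedAddCommGroup Z] [NormedSpace ℝ Z] (q : ℝ) : Prop :=
  ∃ (J : lp (fun _ : ℕ => ℝ) (ENNReal.ofReal q) →ₗ[ℝ] Z) (C c : ℝ), 0 < c ∧
    ∀ f, ‖J f‖ ≤ C * ‖f‖ ∧ c * ‖f‖ ≤ ‖J f‖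

/-- `T` is strictly singular: it is bounded below on no infinite-dimensional subspace. -/
def StrictlySingular {X Y : Type*} [NormedAddCommGroup X] [NormedSpace ℝ X]
    [NormedAddCommGroup Y] [NormedSpace ℝ Y] (T : Y →L[ℝ] X) : Prop :=
  ∀ (Z : Submodule ℝ Y) (c : ℝ), 0 < c → (∀ z ∈ Z, c * ‖z‖ ≤ ‖T z‖) →
    FiniteDimensional ℝ Z

/-- A finite family of Banach spaces is splitting for unconditional bases. -/
def SplittingFamily {ι : Type*} [Fintype ι] (Z : ι → Type*)
    [∀ i, NormedAddCommGroup (Z i)] [∀ i, NormedSpace ℝ (Z i)] : Prop :=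
  ∀ w : ℕ → (∀ i, Z i), IsUncondBasis w →
    ∃ N : ι → Set ℕ, Pairwise (Function.onFun Disjoint N) ∧ (⋃ i, N i) = Set.univ ∧
      ∀ i, Nonempty ((Submodule.span ℝ (w '' N i)).topologicalClosure ≃L[ℝ] Z i)

/-- A pair of Banach spaces is splitting for unconditional bases. -/
def SplittingPair (U V : Type*) [NormedAddCommGroup U] [NormedSpace ℝ U]
    [NormedAddCommGroup V] [NormedSpace ℝ V] : Prop :=
  ∀ w : ℕ → U × V, IsUncondBasis w →
    ∃ N₁ N₂ : Set ℕ, Disjoint N₁ N₂ ∧ N₁ ∪ N₂ = Set.univ ∧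
      Nonempty ((Submodule.span ℝ (w '' N₁)).topologicalClosure ≃L[ℝ] U) ∧
      Nonempty ((Submodule.span ℝ (w '' N₂)).topologicalClosure ≃L[ℝ] V)

/-- `U` has a unique, up to equivalence and permutation, unconditional basis. -/
def HasUTAPBasis (U : Type*) [NormedAddCommGroup U] [NormedSpace ℝ U] : Prop :=
  ∃ e : ℕ → U, IsUncondBasis e ∧ SemiNormalized e ∧
    ∀ f : ℕ → U, IsUncondBasis f → SemiNormalized f →
      ∃ π : Equiv.Perm ℕ, SeqEquiv (fun n => f (π n)) e

/-- `y` is a subsymmetric basic sequence: semi-normalized, an unconditional basis of its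
closed linear span, and equivalent to all of its subsequences. -/
def IsSubsymmetric {X : Type*} [NormedAddCommGroup X] [NormedSpace ℝ X] (y : ℕ → X) : Prop :=
  SemiNormalized y ∧ (∀ n, y n ≠ 0) ∧
  (∀ x : X, x ∈ (Submodule.span ℝ (Set.range y)).topologicalClosure →
    ∃! a : ℕ → ℝ, HasSum (fun n => a n • y n) x) ∧
  ∀ k : ℕ → ℕ, StrictMono k → SeqEquiv (fun n => y (k n)) y


/-- Type synonym for the renorming of `X` coming from a basis. -/
def NormCopy (X : Type*) : Type _ := X

theorem uncondCoefBound {X : Type*} [NormedAddCommGroup X] [NormedSpace ℝ X] [CompleteSpace X]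
    (e : ℕ → X) (he : IsUncondBasis e) :
    ∃ coef : X →ₗ[ℝ] (ℕ → ℝ), (∀ x, HasSum (fun n => coef x n • e n) x) ∧
      ∃ M : ℝ, 0 < M ∧ ∀ (x : X) (s : Finset ℕ), ‖∑ n ∈ s, coef x n • e n‖ ≤ M * ‖x‖ := by
  classical
  obtain ⟨hne, hex⟩ := he
  choose c hc huniq using hex
  -- `huniq : ∀ x b, HasSum (fun n => b n • e n) x → b = c x`
  have czero : c 0 = 0 := (huniq 0 0 (by simpa using hasSum_zero)).symm
  have cadd : ∀ x y, c (x + y) = c x + c y := by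
    intro x y
    refine (huniq (x + y) (c x + c y) ?_).symm
    simpa [add_smul] using (hc x).add (hc y)
  have csmul : ∀ (r : ℝ) x, c (r • x) = r • c x := by
    intro r x
    refine (huniq (r • x) (r • c x) ?_).symm
    simpa [smul_smul] using (hc x).const_smul r
  have csub : ∀ x y, c (x - y) = c x - c y := by
    intro x y
    have := cadd (x - y) y
    simp only [sub_add_cancel] at this
    rw [this]; abel
  -- bounded partial sums for each x
  have bdd : ∀ x : X, BddAbove (Set.range fun s : Finset ℕ => ‖∑ n ∈ s, c x n • e n‖) := by
    intro x
    obtain ⟨s₀, hs₀⟩ := summable_iff_vanishing_norm.mp (hc x).summable 1 one_pos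
    refine ⟨∑ n ∈ s₀, ‖c x n • e n‖ + 1, ?_⟩
    rintro - ⟨s, rfl⟩
    have hsplit : ∑ n ∈ s ∩ s₀, (c x n • e n) + ∑ n ∈ s \ s₀, (c x n • e n)
        = ∑ n ∈ s, c x n • e n := Finset.sum_inter_add_sum_sdiff s s₀ _
    calc ‖∑ n ∈ s, c x n • e n‖
        ≤ ‖∑ n ∈ s ∩ s₀, c x n • e n‖ + ‖∑ n ∈ s \ s₀, c x n • e n‖ := by
          rw [← hsplit]; exact norm_add_le _ _
      _ ≤ ∑ n ∈ s₀, ‖c x n • e n‖ + 1 := by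
          gcongr
          · exact (norm_sum_le _ _).trans (Finset.sum_le_sum_of_subset_of_nonneg
              (Finset.inter_subset_right) (fun _ _ _ => norm_nonneg _))
          · exact (hs₀ _ (Finset.sdiff_disjoint)).le
  set N : X → ℝ := fun x => ⨆ s : Finset ℕ, ‖∑ n ∈ s, c x n • e n‖ with hN
  have le_N : ∀ (x : X) (s : Finset ℕ), ‖∑ n ∈ s, c x n • e n‖ ≤ N x :=
    fun x s => le_ciSup (bdd x) s
  have N_le : ∀ (x : X) (b : ℝ), (∀ s : Finset ℕ, ‖∑ n ∈ s, c x n • e n‖ ≤ b) → N x ≤ b :=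
    fun x b h => ciSup_le h
  have norm_le_N : ∀ x : X, ‖x‖ ≤ N x := by
    intro x
    have ht : Filter.Tendsto (fun s : Finset ℕ => ‖∑ n ∈ s, c x n • e n‖) Filter.atTop
        (nhds ‖x‖) := (continuous_norm.tendsto x).comp (hc x)
    exact le_of_tendsto ht (Filter.Eventually.of_forall (le_N x))
  have N_zero : N 0 = 0 := by
    apply le_antisymm
    · exact N_le 0 0 (fun s => by simp [czero])
    · simpa using le_N 0 ∅
  -- instances on the copy
  letI : AddCommGroup (NormCopy X) := inferInstanceAs (AddCommGroup X)
  letI : Module ℝ (NormCopy X) := inferInstanceAs (Module ℝ X)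
  letI : NormedAddCommGroup (NormCopy X) := AddGroupNorm.toNormedAddCommGroup
    { toFun := fun w => N (show X from w)
      map_zero' := N_zero
      add_le' := by
        intro w w'
        refine N_le _ _ (fun s => ?_)
        change ‖∑ n ∈ s, c ((w : X) + (w' : X)) n • e n‖ ≤ N w + N w'
        rw [show c (w + w') = c w + c w' from cadd _ _]
        simp only [Pi.add_apply, add_smul, Finset.sum_add_distrib]
        exact (norm_add_le _ _).trans (add_le_add (le_N _ s) (le_N _ s))
      neg' := by
        intro w
        have : c (-(show X from w)) = -c w := by
          exact (huniq _ _ (by simpa [neg_smul] using (hc (show X from w)).neg)).symm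
        simp only
        apply le_antisymm
        · refine N_le _ _ (fun s => ?_)
          erw [this]
          simp only [Pi.neg_apply, neg_smul, Finset.sum_neg_distrib, norm_neg]
          exact le_N _ s
        · refine N_le _ _ (fun s => ?_)
          have h2 : ∀ n, c w n • e n = -(c (-(show X from w)) n • e n) := by
            intro n; rw [this]; simp
          calc ‖∑ n ∈ s, c w n • e n‖ = ‖∑ n ∈ s, c (-(show X from w)) n • e n‖ := by
                simp_rw [h2]; rw [Finset.sum_neg_distrib, norm_neg]
            _ ≤ _ := le_N _ s
      eq_zero_of_map_eq_zero' := by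
        intro w hw
        have hz : ∀ n, c (show X from w) n = 0 := by
          intro n
          have h1 : ‖c (show X from w) n • e n‖ ≤ 0 := by
            simpa using (le_N (show X from w) {n}).trans hw.le
          have := norm_nonneg (c (show X from w) n • e n)
          have hnn : c (show X from w) n • e n = 0 := by
            rw [← norm_eq_zero]; linarith
          rcases smul_eq_zero.mp hnn with h | h
          · exact h
          · exact absurd h (hne n)
        have : HasSum (fun n => c (show X from w) n • e n) (show X from w) := hc _
        have h0 : HasSum (fun n => c (show X from w) n • e n) 0 := by
          simpa [hz] using (hasSum_zero : HasSum (fun _ : ℕ => (0:X)) 0)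
        exact this.unique h0 }
  letI : NormedSpace ℝ (NormCopy X) := by
    refine ⟨fun r w => ?_⟩
    show N ((r : ℝ) • (show X from w)) ≤ ‖r‖ * N w
    refine N_le _ _ (fun s => ?_)
    rw [csmul]
    calc ‖∑ n ∈ s, (r • c (show X from w)) n • e n‖
        = ‖r • ∑ n ∈ s, c (show X from w) n • e n‖ := by
          rw [Finset.smul_sum]; congr 1; apply Finset.sum_congr rfl; intro n _
          simp [smul_smul]
      _ = ‖r‖ * ‖∑ n ∈ s, c (show X from w) n • e n‖ := norm_smul _ _
      _ ≤ ‖r‖ * N w := by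
          exact mul_le_mul_of_nonneg_left (le_N _ s) (norm_nonneg r)
  have dist_eq : ∀ w w' : NormCopy X, dist w w' = N ((show X from w) - (show X from w')) := fun _ _ => by rw [dist_eq_norm]; rfl
  letI : CompleteSpace (NormCopy X) := by
    apply Metric.complete_of_cauchySeq_tendsto
    intro u hu
    -- coordinatewise limits
    have coordCauchy : ∀ j : ℕ, CauchySeq (fun k => c (show X from u k) j) := by
      intro j
      rw [Metric.cauchySeq_iff]
      intro ε hε
      have hej : 0 < ‖e j‖ := norm_pos_iff.mpr (hne j)
      obtain ⟨K, hK⟩ := Metric.cauchySeq_iff.mp hu (ε * ‖e j‖) (by positivity)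
      refine ⟨K, fun m hm n hn => ?_⟩
      have h1 : ‖(c (show X from u m) j - c (show X from u n) j) • e j‖
          ≤ N ((show X from u m) - (show X from u n)) := by
        have := le_N ((show X from u m) - (show X from u n)) {j}
        erw [csub] at this
        simpa [Pi.sub_apply] using this
      have h2 := hK m hm n hn
      rw [dist_eq] at h2
      rw [Real.dist_eq]
      have : |c (show X from u m) j - c (show X from u n) j| * ‖e j‖ < ε * ‖e j‖ := by
        calc |c (show X from u m) j - c (show X from u n) j| * ‖e j‖
            = ‖(c (show X from u m) j - c (show X from u n) j) • e j‖ := by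
              rw [norm_smul, Real.norm_eq_abs]
          _ ≤ N ((show X from u m) - (show X from u n)) := h1
          _ < ε * ‖e j‖ := h2
      exact lt_of_mul_lt_mul_right this hej.le |>.trans_le le_rfl
    have : ∀ j : ℕ, ∃ bj : ℝ, Filter.Tendsto (fun k => c (show X from u k) j)
        Filter.atTop (nhds bj) := fun j => cauchySeq_tendsto_of_complete (coordCauchy j)
    choose b hb using this
    -- uniform estimate
    have key : ∀ ε : ℝ, 0 < ε → ∃ K : ℕ, ∀ k ≥ K, ∀ s : Finset ℕ,
        ‖∑ n ∈ s, (c (show X from u k) n - b n) • e n‖ ≤ ε := by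
      intro ε hε
      obtain ⟨K, hK⟩ := Metric.cauchySeq_iff.mp hu (ε/2) (by positivity)
      refine ⟨K, fun k hk s => ?_⟩
      have htend : Filter.Tendsto
          (fun l => ‖∑ n ∈ s, (c (show X from u k) n - c (show X from u l) n) • e n‖)
          Filter.atTop (nhds ‖∑ n ∈ s, (c (show X from u k) n - b n) • e n‖) := by
        apply (continuous_norm.tendsto _).comp
        apply tendsto_finset_sum
        intro n _
        exact (((hb n).const_sub _).smul_const (e n))
      refine le_of_tendsto htend ?_
      filter_upwards [Filter.eventually_ge_atTop K] with l hl
      have h2 := hK k hk l hl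
      rw [dist_eq] at h2
      have h3 : ‖∑ n ∈ s, (c (show X from u k) n - c (show X from u l) n) • e n‖
          ≤ N ((show X from u k) - (show X from u l)) := by
        refine le_trans (le_of_eq ?_) (le_N ((show X from u k) - (show X from u l)) s)
        rw [csub]
        simp [Pi.sub_apply]
      linarith
    -- b gives a summable expansion
    have hbsum : Summable (fun n => b n • e n) := by
      rw [summable_iff_vanishing_norm]
      intro ε hε
      obtain ⟨K, hK⟩ := key (ε/2) (by positivity)
      obtain ⟨s₀, hs₀⟩ := summable_iff_vanishing_norm.mp (hc (show X from u K)).summable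
        (ε/2) (by positivity)
      refine ⟨s₀, fun t ht => ?_⟩
      have h1 : ‖∑ n ∈ t, (c (show X from u K) n - b n) • e n‖ ≤ ε/2 := hK K le_rfl t
      have h2 : ‖∑ n ∈ t, c (show X from u K) n • e n‖ < ε/2 := hs₀ t ht
      have : ∑ n ∈ t, b n • e n = ∑ n ∈ t, c (show X from u K) n • e n
          - ∑ n ∈ t, (c (show X from u K) n - b n) • e n := by
        rw [← Finset.sum_sub_distrib]
        apply Finset.sum_congr rfl; intro n _
        rw [sub_smul]; abel
      rw [this]
      calc ‖_ - _‖ ≤ ‖∑ n ∈ t, c (show X from u K) n • e n‖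
            + ‖∑ n ∈ t, (c (show X from u K) n - b n) • e n‖ := norm_sub_le _ _
        _ < ε := by linarith
    set x : X := ∑' n, b n • e n with hx
    have hbx : HasSum (fun n => b n • e n) x := hbsum.hasSum
    have hcx : c x = b := (huniq x b hbx).symm
    refine ⟨(show NormCopy X from x), ?_⟩
    rw [Metric.tendsto_atTop]
    intro ε hε
    obtain ⟨K, hK⟩ := key (ε/2) (by positivity)
    refine ⟨K, fun k hk => ?_⟩
    rw [dist_eq]
    have : N ((show X from u k) - x) ≤ ε/2 := by
      refine N_le _ _ (fun s => ?_)
      have := hK k hk s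
      rw [csub, hcx]
      simpa [Pi.sub_apply] using this
    linarith
  -- the identity map and open mapping
  let T : NormCopy X →ₗ[ℝ] X :=
    { toFun := fun w => (show X from w)
      map_add' := fun _ _ => rfl
      map_smul' := fun _ _ => rfl }
  have Tbound : ∀ w : NormCopy X, ‖T w‖ ≤ 1 * ‖w‖ := by
    intro w
    rw [one_mul]
    exact norm_le_N (show X from w)
  let Tc : NormCopy X →L[ℝ] X := T.mkContinuous 1 Tbound
  have hker : LinearMap.ker (Tc : NormCopy X →ₗ[ℝ] X) = ⊥ := by
    rw [LinearMap.ker_eq_bot']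
    intro w hw
    exact hw
  have hrange : LinearMap.range (Tc : NormCopy X →ₗ[ℝ] X) = ⊤ := by
    rw [LinearMap.range_eq_top]
    exact fun x => ⟨(show NormCopy X from x), rfl⟩
  let equiv : NormCopy X ≃L[ℝ] X := ContinuousLinearEquiv.ofBijective Tc hker hrange
  have hsymm : ∀ x : X, (show X from equiv.symm x) = x := by
    intro x
    exact congrArg (fun w => Tc w) (equiv.apply_symm_apply x)
  set M : ℝ := ‖(equiv.symm : X →L[ℝ] NormCopy X)‖ + 1 with hM
  have hM0 : 0 < M := by positivity
  have hNM : ∀ x : X, N x ≤ M * ‖x‖ := by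
    intro x
    have h1 : ‖equiv.symm x‖ ≤ ‖(equiv.symm : X →L[ℝ] NormCopy X)‖ * ‖x‖ :=
      (equiv.symm : X →L[ℝ] NormCopy X).le_opNorm x
    have h2 : ‖equiv.symm x‖ = N x := by
      show N (show X from equiv.symm x) = N x
      rw [hsymm]
    rw [h2] at h1
    have : ‖(equiv.symm : X →L[ℝ] NormCopy X)‖ * ‖x‖ ≤ M * ‖x‖ := by
      apply mul_le_mul_of_nonneg_right _ (norm_nonneg x)
      simp [hM]
    linarith
  exact ⟨{ toFun := c, map_add' := cadd, map_smul' := csmul }, hc, M, hM0,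
    fun x s => (le_N x s).trans (hNM x)⟩


set_option maxHeartbeats 1000000 in
theorem glidingHump {X : Type*} [NormedAddCommGroup X] [NormedSpace ℝ X] [CompleteSpace X]
    (e : ℕ → X) (he : IsUncondBasis e) (q p : ℝ) (hq : 1 ≤ q) (hqp : q < p)
    (hlow : LowerEstimate e q) (x : ℕ → X) (ε C : ℝ) (hε : 0 < ε) (hC : 0 ≤ C)
    (hxl : ∀ n, ε ≤ ‖x n‖)
    (hupper : ∀ (a : ℕ → ℝ) (s : Finset ℕ), (∀ n, |a n| ≤ 1) →
      ‖∑ n ∈ s, a n • x n‖ ≤ C * (s.card : ℝ) ^ (1/p)) : False := by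
  classical
  have hp1 : 1 < p := lt_of_le_of_lt hq hqp
  have hp0 : 0 < p := by linarith
  have hq0 : 0 < q := by linarith
  obtain ⟨coef, hcoef, M, hM, hMb⟩ := uncondCoefBound e he
  -- Step 1 : coordinate decay
  have decay : ∀ j : ℕ, Filter.Tendsto (fun n => coef (x n) j) Filter.atTop (nhds 0) := by
    intro j
    have hej : 0 < ‖e j‖ := norm_pos_iff.mpr (he.1 j)
    set K : ℝ := M * C / ‖e j‖ with hK
    have hK0 : 0 ≤ K := by positivity
    have habs : ∀ s : Finset ℕ, ∑ n ∈ s, |coef (x n) j| ≤ K * (s.card : ℝ) ^ (1/p) := by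
      intro s
      set a : ℕ → ℝ := fun n => if 0 ≤ coef (x n) j then 1 else -1 with ha
      have haone : ∀ n, |a n| ≤ 1 := by
        intro n; by_cases h : 0 ≤ coef (x n) j <;> simp [ha, h]
      set z : X := ∑ n ∈ s, a n • x n with hz
      have hcz : coef z j = ∑ n ∈ s, |coef (x n) j| := by
        rw [hz, map_sum]
        rw [Finset.sum_apply]
        apply Finset.sum_congr rfl
        intro n _
        by_cases h : 0 ≤ coef (x n) j
        · simp [ha, h, map_smul, abs_of_nonneg h]
        · simp [ha, h, map_smul, abs_of_neg (lt_of_not_ge h)]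
      have h1 : |coef z j| * ‖e j‖ ≤ M * ‖z‖ := by
        have := hMb z {j}
        simpa [norm_smul, Real.norm_eq_abs] using this
      have h2 : ‖z‖ ≤ C * (s.card : ℝ) ^ (1/p) := hupper a s haone
      have h3 : |coef z j| ≤ M * (C * (s.card : ℝ) ^ (1/p)) / ‖e j‖ := by
        rw [le_div_iff₀ hej]
        calc |coef z j| * ‖e j‖ ≤ M * ‖z‖ := h1
          _ ≤ M * (C * (s.card : ℝ) ^ (1/p)) := by
              exact mul_le_mul_of_nonneg_left h2 hM.le
      calc ∑ n ∈ s, |coef (x n) j| = coef z j := hcz.symm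
        _ ≤ |coef z j| := le_abs_self _
        _ ≤ M * (C * (s.card : ℝ) ^ (1/p)) / ‖e j‖ := h3
        _ = K * (s.card : ℝ) ^ (1/p) := by rw [hK]; ring
    rw [NormedAddCommGroup.tendsto_nhds_zero]
    intro d hd
    by_contra hcon
    have hfreq : ∀ N : ℕ, ∃ n, N ≤ n ∧ d ≤ |coef (x n) j| := by
      intro N
      rw [Filter.not_eventually] at hcon
      obtain ⟨n, hn, hn2⟩ := (Filter.frequently_atTop.mp hcon) N
      rw [Real.norm_eq_abs] at hn2
      exact ⟨n, hn, not_lt.mp hn2⟩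
    have hinf : {n : ℕ | d ≤ |coef (x n) j|}.Infinite := by
      apply Set.infinite_of_not_bddAbove
      rintro ⟨B, hB⟩
      obtain ⟨n, hn1, hn2⟩ := hfreq (B + 1)
      have := hB hn2
      omega
    -- for every m, get m indices with |coef| ≥ d
    have hdm : ∀ m : ℕ, d * m ≤ K * (m : ℝ) ^ (1/p) := by
      intro m
      obtain ⟨t, ht, htc⟩ := hinf.exists_subset_card_eq m
      have h1 : d * m ≤ ∑ n ∈ t, |coef (x n) j| := by
        rw [← htc]
        calc d * t.card = ∑ _n ∈ t, d := by rw [Finset.sum_const, nsmul_eq_mul]; ring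
          _ ≤ _ := Finset.sum_le_sum (fun n hn => ht hn)
      exact h1.trans ((habs t).trans_eq (by rw [htc]))
    -- contradiction from growth
    have hr : 0 < 1 - 1/p := by
      have : 1/p < 1 := by rw [div_lt_one hp0]; exact hp1
      linarith
    have hgrow : Filter.Tendsto (fun m : ℕ => (m : ℝ) ^ (1 - 1/p)) Filter.atTop Filter.atTop :=
      (tendsto_rpow_atTop hr).comp tendsto_natCast_atTop_atTop
    obtain ⟨m, hm1, hm2⟩ := ((hgrow.eventually_gt_atTop (K / d)).and
      (Filter.eventually_ge_atTop 1)).exists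
    have hmpos : (0:ℝ) < (m:ℝ) := by exact_mod_cast hm2
    have hsplit : (m:ℝ) = (m:ℝ) ^ (1/p) * (m:ℝ) ^ (1 - 1/p) := by
      rw [← Real.rpow_add hmpos]; simp
    have h1 : d * ((m:ℝ) ^ (1/p) * (m:ℝ) ^ (1 - 1/p)) ≤ K * (m:ℝ) ^ (1/p) := by
      rw [← hsplit]; exact hdm m
    have hKd : K < d * (m:ℝ) ^ (1 - 1/p) := by
      rw [div_lt_iff₀ hd] at hm1
      calc K = K / d * d := by field_simp
        _ < (m:ℝ) ^ (1 - 1/p) * d := by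
            apply mul_lt_mul_of_pos_right _ hd
            rw [div_lt_iff₀ hd]; exact hm1
        _ = d * (m:ℝ) ^ (1 - 1/p) := mul_comm _ _
    nlinarith [Real.rpow_pos_of_pos hmpos (1/p)]
  -- Step 2 : recursive construction of almost disjoint blocks
  set Qp : ℕ → X → X := fun k z => ∑ m ∈ Finset.range k, coef z m • e m with hQp
  set η : ℕ → ℝ := fun t => ε / 2 ^ (t + 3) with hη
  have hηpos : ∀ t, 0 < η t := by intro t; rw [hη]; positivity
  have step : ∀ (t N lo : ℕ), ∃ z : ℕ × ℕ, N < z.1 ∧ lo ≤ z.2 ∧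
      ‖Qp lo (x z.1)‖ ≤ η t ∧ ‖x z.1 - Qp z.2 (x z.1)‖ ≤ η t := by
    intro t N lo
    have htend : Filter.Tendsto (fun n => Qp lo (x n)) Filter.atTop (nhds 0) := by
      rw [hQp]
      have : Filter.Tendsto (fun n => ∑ m ∈ Finset.range lo, coef (x n) m • e m)
          Filter.atTop (nhds (∑ m ∈ Finset.range lo, (0:ℝ) • e m)) := by
        apply tendsto_finset_sum
        intro m _
        exact (decay m).smul_const (e m)
      simpa using this
    have htn : Filter.Tendsto (fun n => ‖Qp lo (x n)‖) Filter.atTop (nhds 0) := by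
      simpa using htend.norm
    have hev : ∀ᶠ n in Filter.atTop, ‖Qp lo (x n)‖ ≤ η t ∧ N < n := by
      filter_upwards [htn.eventually_le_const (hηpos t),
        Filter.eventually_gt_atTop N] with n h1 h2
      · constructor
        · simpa using h1
        · exact h2
    obtain ⟨n, hn1, hn2⟩ := hev.exists
    -- now pick the truncation level
    have htr : Filter.Tendsto (fun k => Qp k (x n)) Filter.atTop (nhds (x n)) := by
      rw [hQp]
      exact (hcoef (x n)).tendsto_sum_nat
    have : ∀ᶠ k in Filter.atTop, ‖x n - Qp k (x n)‖ ≤ η t ∧ lo ≤ k := by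
      have h3 : Filter.Tendsto (fun k => ‖x n - Qp k (x n)‖) Filter.atTop (nhds 0) := by
        have h4 : Filter.Tendsto (fun k => x n - Qp k (x n)) Filter.atTop (nhds (x n - x n)) :=
          Filter.Tendsto.sub tendsto_const_nhds htr
        simpa using h4.norm
      filter_upwards [h3.eventually_le_const (hηpos t), Filter.eventually_ge_atTop lo]
        with k h4 h5
      exact ⟨by simpa using h4, h5⟩
    obtain ⟨k, hk1, hk2⟩ := this.exists
    exact ⟨(n, k), hn2, hk2, hn1, hk1⟩
  set g : ℕ → ℕ × ℕ := fun t => Nat.rec ((step 0 0 0).choose)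
    (fun t' ih => (step (t'+1) ih.1 ih.2).choose) t with hg
  set nn : ℕ → ℕ := fun t => (g t).1 with hnn
  set hi : ℕ → ℕ := fun t => (g t).2 with hhi
  set lo : ℕ → ℕ := fun t => Nat.rec 0 (fun t' _ => hi t') t with hlo
  have hlo0 : lo 0 = 0 := rfl
  have hlosucc : ∀ t, lo (t + 1) = hi t := fun t => rfl
  have hgsucc : ∀ t, g (t + 1) = (step (t+1) (nn t) (hi t)).choose := fun t => rfl
  have spec : ∀ t, (lo t ≤ hi t) ∧ ‖Qp (lo t) (x (nn t))‖ ≤ η t ∧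
      ‖x (nn t) - Qp (hi t) (x (nn t))‖ ≤ η t ∧ (∀ t', t = t' + 1 → nn t' < nn t) := by
    intro t
    cases t with
    | zero =>
      obtain ⟨h1, h2, h3, h4⟩ := (step 0 0 0).choose_spec
      exact ⟨h2, h3, h4, fun t' ht' => by omega⟩
    | succ t' =>
      obtain ⟨h1, h2, h3, h4⟩ := (step (t'+1) (nn t') (hi t')).choose_spec
      refine ⟨h2, h3, h4, fun t'' ht'' => ?_⟩
      have : t'' = t' := by omega
      subst this
      exact h1
  have hnmono : StrictMono nn := by
    apply strictMono_nat_of_lt_succ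
    intro t
    exact (spec (t+1)).2.2.2 t rfl
  have hhimono : Monotone hi := by
    apply monotone_nat_of_le_succ
    intro t
    have := (spec (t+1)).1
    rwa [hlosucc] at this
  have hsep : ∀ t t' : ℕ, t < t' → hi t ≤ lo t' := by
    intro t t' h
    obtain ⟨k, rfl⟩ : ∃ k, t' = k + 1 := ⟨t' - 1, by omega⟩
    rw [hlosucc]
    exact hhimono (by omega)
  -- the blocks
  set v : ℕ → X := fun t => ∑ m ∈ Finset.Ico (lo t) (hi t), coef (x (nn t)) m • e m with hv
  have hvQ : ∀ t, v t = Qp (hi t) (x (nn t)) - Qp (lo t) (x (nn t)) := by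
    intro t
    rw [hv, hQp]
    simp only
    rw [Finset.sum_Ico_eq_sub _ (spec t).1]
  have hxv : ∀ t, ‖x (nn t) - v t‖ ≤ 2 * η t := by
    intro t
    have : x (nn t) - v t = (x (nn t) - Qp (hi t) (x (nn t))) + Qp (lo t) (x (nn t)) := by
      rw [hvQ t]; abel
    rw [this]
    calc ‖_ + _‖ ≤ ‖x (nn t) - Qp (hi t) (x (nn t))‖ + ‖Qp (lo t) (x (nn t))‖ := norm_add_le _ _
      _ ≤ η t + η t := add_le_add (spec t).2.2.1 (spec t).2.1
      _ = 2 * η t := by ring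
  have hηsmall : ∀ t, 2 * η t ≤ ε / 4 := by
    intro t
    rw [hη]
    simp only
    have h8 : (8:ℝ) ≤ 2 ^ (t + 3) := by
      calc (8:ℝ) = 2 ^ 3 := by norm_num
        _ ≤ 2 ^ (t + 3) := by
          apply pow_le_pow_right₀ (by norm_num)
          omega
    have hd : ε / 2 ^ (t + 3) ≤ ε / 8 := by
      apply div_le_div_of_nonneg_left hε.le (by norm_num)
      exact h8
    linarith
  have hvlow : ∀ t, ε / 2 ≤ ‖v t‖ := by
    intro t
    have h1 := hxl (nn t)
    have h2 := (hxv t).trans (hηsmall t)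
    have h3 : ‖x (nn t)‖ - ‖v t‖ ≤ ‖x (nn t) - v t‖ := norm_sub_norm_le _ _
    linarith
  -- Step 3 : the lower estimate contradiction
  obtain ⟨Cx, hCx, hlowC⟩ := hlow
  have main : ∀ m : ℕ, (m:ℝ) ^ (1/q) * (ε/2) ≤ Cx * (C * (m:ℝ) ^ (1/p) + ε/2) := by
    intro m
    have happ := hlowC m (fun i => v i) (fun i => Finset.Ico (lo i) (hi i)) ?_ ?_
    · -- LHS bound
      have hL : (m:ℝ) ^ (1/q) * (ε/2) ≤ (∑ i : Fin m, ‖v (i:ℕ)‖ ^ q) ^ (1/q) := by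
        have h1 : ∀ i : Fin m, (ε/2) ^ q ≤ ‖v (i:ℕ)‖ ^ q := by
          intro i
          exact Real.rpow_le_rpow (by positivity) (hvlow i) hq0.le
        have h2 : (m:ℝ) * (ε/2) ^ q ≤ ∑ i : Fin m, ‖v (i:ℕ)‖ ^ q := by
          calc (m:ℝ) * (ε/2) ^ q = ∑ _i : Fin m, (ε/2) ^ q := by
                rw [Finset.sum_const, Finset.card_univ, Fintype.card_fin, nsmul_eq_mul]
            _ ≤ _ := Finset.sum_le_sum (fun i _ => h1 i)
        calc (m:ℝ) ^ (1/q) * (ε/2)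
            = ((m:ℝ) * (ε/2) ^ q) ^ (1/q) := by
              rw [Real.mul_rpow (by positivity) (by positivity),
                ← Real.rpow_mul (by positivity : (0:ℝ) ≤ ε/2),
                mul_one_div_cancel (ne_of_gt hq0), Real.rpow_one]
          _ ≤ _ := Real.rpow_le_rpow (by positivity) h2 (by positivity)
      -- RHS bound
      have hR : ‖∑ i : Fin m, v (i:ℕ)‖ ≤ C * (m:ℝ) ^ (1/p) + ε/2 := by
        rw [Fin.sum_univ_eq_sum_range]
        have hsum : ∑ t ∈ Finset.range m, v t
            = ∑ t ∈ Finset.range m, x (nn t) - ∑ t ∈ Finset.range m, (x (nn t) - v t) := by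
          rw [← Finset.sum_sub_distrib]
          apply Finset.sum_congr rfl
          intro t _
          abel
        have h1 : ‖∑ t ∈ Finset.range m, x (nn t)‖ ≤ C * (m:ℝ) ^ (1/p) := by
          have := hupper (fun _ => 1) ((Finset.range m).image nn) (fun n => by norm_num)
          rw [Finset.sum_image (fun a _ b _ h => hnmono.injective h)] at this
          rw [Finset.card_image_of_injective _ hnmono.injective, Finset.card_range] at this
          simpa using this
        have h2 : ‖∑ t ∈ Finset.range m, (x (nn t) - v t)‖ ≤ ε/2 := by
          calc ‖∑ t ∈ Finset.range m, (x (nn t) - v t)‖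
              ≤ ∑ t ∈ Finset.range m, ‖x (nn t) - v t‖ := norm_sum_le _ _
            _ ≤ ∑ t ∈ Finset.range m, (ε/4) * (1/2) ^ t := by
                apply Finset.sum_le_sum
                intro t _
                have := hxv t
                have h3 : 2 * η t = (ε/4) * (1/2)^t := by
                  rw [hη]
                  simp only
                  rw [pow_add]
                  field_simp
                  rw [mul_assoc, ← mul_pow]; norm_num
                linarith [hxv t, h3]
            _ = (ε/4) * ∑ t ∈ Finset.range m, (1/2:ℝ) ^ t := by rw [Finset.mul_sum]
            _ ≤ (ε/4) * 2 := by
                apply mul_le_mul_of_nonneg_left _ (by positivity)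
                exact sum_geometric_two_le m
            _ = ε/2 := by ring
        rw [hsum]
        calc ‖_ - _‖ ≤ ‖∑ t ∈ Finset.range m, x (nn t)‖
              + ‖∑ t ∈ Finset.range m, (x (nn t) - v t)‖ := norm_sub_le _ _
          _ ≤ C * (m:ℝ) ^ (1/p) + ε/2 := add_le_add h1 h2
      calc (m:ℝ) ^ (1/q) * (ε/2) ≤ (∑ i : Fin m, ‖v (i:ℕ)‖ ^ q) ^ (1/q) := hL
        _ ≤ Cx * ‖∑ i : Fin m, v (i:ℕ)‖ := happ
        _ ≤ Cx * (C * (m:ℝ) ^ (1/p) + ε/2) := mul_le_mul_of_nonneg_left hR hCx.le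
    · -- pairwise disjoint
      intro i j hij
      rcases lt_or_gt_of_ne hij with h | h
      · have hs := hsep i j (by exact_mod_cast h)
        rw [Function.onFun]
        apply Finset.disjoint_left.mpr
        intro k hk hk'
        simp only [Finset.mem_Ico] at hk hk'
        omega
      · have hs := hsep j i (by exact_mod_cast h)
        rw [Function.onFun]
        apply Finset.disjoint_left.mpr
        intro k hk hk'
        simp only [Finset.mem_Ico] at hk hk'
        omega
    · -- span membership
      intro i
      rw [hv]
      apply Submodule.sum_mem
      intro m hm
      apply Submodule.smul_mem
      apply Submodule.subset_span
      exact ⟨m, by simpa using hm, rfl⟩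
  -- Step 4 : growth contradiction
  have hr : 0 < 1/q - 1/p := by
    rw [sub_pos, div_lt_div_iff₀ hp0 hq0]
    linarith
  have hgrow : Filter.Tendsto (fun m : ℕ => (m : ℝ) ^ (1/q - 1/p)) Filter.atTop Filter.atTop :=
    (tendsto_rpow_atTop hr).comp tendsto_natCast_atTop_atTop
  set K2 : ℝ := Cx * C + Cx * (ε/2) with hK2
  have hK2pos : 0 < K2 := by
    rw [hK2]
    have h1 : 0 < Cx * (ε/2) := by positivity
    nlinarith [mul_nonneg hCx.le hC]
  obtain ⟨m, hm1, hm2⟩ := ((hgrow.eventually_gt_atTop (K2 / (ε/2))).and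
    (Filter.eventually_ge_atTop 1)).exists
  have hmpos : (0:ℝ) < (m:ℝ) := by exact_mod_cast hm2
  have hm1R : (1:ℝ) ≤ (m:ℝ) := by exact_mod_cast hm2
  have hmsplit : (m:ℝ) ^ (1/q) = (m:ℝ) ^ (1/p) * (m:ℝ) ^ (1/q - 1/p) := by
    rw [← Real.rpow_add hmpos]; ring_nf
  have hmp1 : (1:ℝ) ≤ (m:ℝ) ^ (1/p) := Real.one_le_rpow hm1R (by positivity)
  have hmain := main m
  rw [hmsplit] at hmain
  have hlhs : (m:ℝ) ^ (1/p) * (K2 / (ε/2)) * (ε/2) < (m:ℝ) ^ (1/p) * (m:ℝ) ^ (1/q - 1/p) * (ε/2) := by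
    have hmp : 0 < (m:ℝ) ^ (1/p) := Real.rpow_pos_of_pos hmpos _
    apply mul_lt_mul_of_pos_right _ (by positivity)
    exact mul_lt_mul_of_pos_left hm1 hmp
  have hsimp : (m:ℝ) ^ (1/p) * (K2 / (ε/2)) * (ε/2) = K2 * (m:ℝ) ^ (1/p) := by
    field_simp
  rw [hsimp] at hlhs
  have hrhs : Cx * (C * (m:ℝ) ^ (1/p) + ε/2) ≤ K2 * (m:ℝ) ^ (1/p) := by
    rw [hK2]
    have : Cx * (ε/2) ≤ Cx * (ε/2) * (m:ℝ) ^ (1/p) := by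
      nlinarith [mul_pos hCx (half_pos hε)]
    nlinarith
  linarith



set_option maxHeartbeats 1600000 in
set_option synthInstance.maxHeartbeats 400000 in
theorem forwardDir {X Y : Type*} [NormedAddCommGroup X] [NormedSpace ℝ X] [CompleteSpace X]
    [NormedAddCommGroup Y] [NormedSpace ℝ Y] [CompleteSpace Y]
    (p q : ℝ) (hq : 1 ≤ q) (hqp : q < p)
    (e : ℕ → X) (he : IsUncondBasis e) (hlow : LowerEstimate e q)
    (h : ContainsLp (X × Y) p) : ContainsLp Y p := by
  classical
  have hp1 : 1 < p := lt_of_le_of_lt hq hqp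
  set P : ENNReal := ENNReal.ofReal p with hP
  haveI : Fact (1 ≤ P) := ⟨ENNReal.one_le_ofReal.mpr (by linarith)⟩
  have hPt : P.toReal = p := ENNReal.toReal_ofReal (by linarith)
  have hPt0 : 0 < P.toReal := by rw [hPt]; linarith
  have hPne : P ≠ 0 := by
    intro h0
    rw [h0] at hPt
    simp at hPt
    linarith
  obtain ⟨J, C, c, hc, hJ⟩ := h
  set Jc : lp (fun _ : ℕ => ℝ) P →L[ℝ] X × Y := J.mkContinuous C (fun f => (hJ f).1) with hJc
  have hJcf : ∀ f, Jc f = J f := fun f => rfl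
  set P₁ : lp (fun _ : ℕ => ℝ) P →L[ℝ] X := (ContinuousLinearMap.fst ℝ X Y).comp Jc with hP₁
  set P₂ : lp (fun _ : ℕ => ℝ) P →L[ℝ] Y := (ContinuousLinearMap.snd ℝ X Y).comp Jc with hP₂
  -- Step 1 : smallness of P₁ on finitely supported far-out vectors
  have small : ∀ ε : ℝ, 0 < ε → ∀ N : ℕ, ∃ f : lp (fun _ : ℕ => ℝ) P,
      (∀ i, i < N → f i = 0) ∧ (∃ N', ∀ i, N' ≤ i → f i = 0) ∧ ‖f‖ = 1 ∧ ‖P₁ f‖ < ε := by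
    by_contra hcon
    push_neg at hcon
    obtain ⟨ε, hε, N, hcon⟩ := hcon
    have sg : ℕ → ℝ → lp (fun _ : ℕ => ℝ) P := fun i r => lp.single P i r
    set x : ℕ → X := fun n => P₁ (lp.single (E := fun _ : ℕ => ℝ) P (n + N) (1:ℝ)) with hx
    have hnorm1 : ∀ n : ℕ, ‖lp.single (E := fun _ : ℕ => ℝ) P (n + N) (1:ℝ)‖ = 1 := by
      intro n
      have := lp.norm_single (p := P) (E := fun _ : ℕ => ℝ) (pos_iff_ne_zero.mpr hPne) (n + N) (1:ℝ)
      simpa using this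
    have hxl : ∀ n, ε ≤ ‖x n‖ := by
      intro n
      apply hcon (lp.single (E := fun _ : ℕ => ℝ) P (n + N) (1:ℝ))
      · intro i hi
        exact lp.single_apply_ne (E := fun _ : ℕ => ℝ) P (n + N) (1:ℝ) (by omega)
      · exact ⟨n + N + 1, fun i hi => lp.single_apply_ne (E := fun _ : ℕ => ℝ) P (n + N) (1:ℝ) (by omega)⟩
      · exact hnorm1 n
    have hupper : ∀ (a : ℕ → ℝ) (s : Finset ℕ), (∀ n, |a n| ≤ 1) →
        ‖∑ n ∈ s, a n • x n‖ ≤ (‖P₁‖ + 1) * (s.card : ℝ) ^ (1/p) := by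
      intro a s ha
      set z : lp (fun _ : ℕ => ℝ) P :=
        ∑ n ∈ s, a n • lp.single (E := fun _ : ℕ => ℝ) P (n + N) (1:ℝ) with hz
      have hPz : ∑ n ∈ s, a n • x n = P₁ z := by
        rw [hz, map_sum]
        apply Finset.sum_congr rfl
        intro n _
        rw [map_smul]
      have hzsingle : z = ∑ i ∈ s.image (· + N),
          lp.single (E := fun _ : ℕ => ℝ) P i ((fun i => a (i - N)) i) := by
        rw [Finset.sum_image (fun x _ y _ h => by omega)]
        rw [hz]
        apply Finset.sum_congr rfl
        intro n _
        simp only [Nat.add_sub_cancel]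
        have := lp.single_smul (𝕜 := ℝ) (E := fun _ : ℕ => ℝ) P (n + N) (a n) (1:ℝ)
        rw [← this]
        norm_num
      have hznorm : ‖z‖ ≤ (s.card : ℝ) ^ (1/p) := by
        have hrp : ‖z‖ ^ P.toReal = ∑ i ∈ s.image (· + N), ‖a (i - N)‖ ^ P.toReal := by
          rw [hzsingle]
          exact lp.norm_sum_single hPt0 _ _
        have hle : ‖z‖ ^ P.toReal ≤ (s.card : ℝ) := by
          rw [hrp]
          calc ∑ i ∈ s.image (· + N), ‖a (i - N)‖ ^ P.toReal
              ≤ ∑ _i ∈ s.image (· + N), 1 := by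
                apply Finset.sum_le_sum
                intro i _
                have h1 : ‖a (i - N)‖ ≤ 1 := by rw [Real.norm_eq_abs]; exact ha _
                calc ‖a (i-N)‖ ^ P.toReal ≤ 1 ^ P.toReal :=
                    Real.rpow_le_rpow (norm_nonneg _) h1 hPt0.le
                  _ = 1 := Real.one_rpow _
            _ = ((s.image (· + N)).card : ℝ) := by rw [Finset.sum_const]; simp
            _ = (s.card : ℝ) := by
                rw [Finset.card_image_of_injective _ (fun x y h => by omega)]
        calc ‖z‖ = (‖z‖ ^ P.toReal) ^ (1/P.toReal) := by
              rw [← Real.rpow_mul (norm_nonneg _), mul_one_div_cancel hPt0.ne',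
                Real.rpow_one]
          _ ≤ (s.card : ℝ) ^ (1/P.toReal) := by
              apply Real.rpow_le_rpow (Real.rpow_nonneg (norm_nonneg _) _) hle
              positivity
          _ = (s.card : ℝ) ^ (1/p) := by rw [hPt]
      rw [hPz]
      calc ‖P₁ z‖ ≤ ‖P₁‖ * ‖z‖ := P₁.le_opNorm z
        _ ≤ ‖P₁‖ * (s.card : ℝ) ^ (1/p) :=
            mul_le_mul_of_nonneg_left hznorm (norm_nonneg _)
        _ ≤ (‖P₁‖ + 1) * (s.card : ℝ) ^ (1/p) := by
            apply mul_le_mul_of_nonneg_right (by linarith) (Real.rpow_nonneg (by positivity) _)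
    exact glidingHump e he q p hq hqp hlow x ε (‖P₁‖ + 1) hε (by positivity) hxl hupper
  -- Step 2 : construct the disjoint block sequence
  have step : ∀ (t N : ℕ), ∃ z : lp (fun _ : ℕ => ℝ) P × ℕ, N ≤ z.2 ∧
      (∀ i, i < N → z.1 i = 0) ∧ (∀ i, z.2 ≤ i → z.1 i = 0) ∧ ‖z.1‖ = 1 ∧
      ‖P₁ z.1‖ < (c/4) * (1/2)^(t+1) := by
    intro t N
    obtain ⟨f, hf1, ⟨N', hf2⟩, hf3, hf4⟩ := small ((c/4) * (1/2)^(t+1)) (by positivity) N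
    exact ⟨(f, max N' N), le_max_right _ _, hf1,
      fun i hi => hf2 i (le_trans (le_max_left _ _) hi), hf3, hf4⟩
  set g : ℕ → lp (fun _ : ℕ => ℝ) P × ℕ := fun t => Nat.rec ((step 0 0).choose)
    (fun t' ih => (step (t'+1) ih.2).choose) t with hg
  set u : ℕ → lp (fun _ : ℕ => ℝ) P := fun t => (g t).1 with hu
  set B : ℕ → ℕ := fun t => Nat.rec 0 (fun t' _ => (g t').2) t with hB
  have hB0 : B 0 = 0 := rfl
  have hBsucc : ∀ t, B (t + 1) = (g t).2 := fun t => rfl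
  have spec : ∀ t, B t ≤ B (t+1) ∧ (∀ i, i < B t → u t i = 0) ∧
      (∀ i, B (t+1) ≤ i → u t i = 0) ∧ ‖u t‖ = 1 ∧ ‖P₁ (u t)‖ < (c/4) * (1/2)^(t+1) := by
    intro t
    cases t with
    | zero =>
      obtain ⟨h1, h2, h3, h4, h5⟩ := (step 0 0).choose_spec
      exact ⟨h1, h2, h3, h4, h5⟩
    | succ t' =>
      obtain ⟨h1, h2, h3, h4, h5⟩ := (step (t'+1) ((g t').2)).choose_spec
      exact ⟨h1, h2, h3, h4, h5⟩
  have hBmono : Monotone B := monotone_nat_of_le_succ (fun t => (spec t).1)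
  have hdisj : ∀ t t' : ℕ, t < t' → ∀ i, u t i ≠ 0 → u t' i = 0 := by
    intro t t' h i hne
    by_contra hne'
    have h1 : i < B (t+1) := by
      by_contra h2
      exact hne ((spec t).2.2.1 i (by omega))
    have h2 : B t' ≤ i := by
      by_contra h3
      exact hne' ((spec t').2.1 i (by omega))
    have := hBmono (show t + 1 ≤ t' by omega)
    omega
  -- Step 3 : norm identity for disjointly supported blocks
  have key : ∀ (a : ℕ → ℝ) (s : Finset ℕ),
      ‖∑ t ∈ s, a t • u t‖ ^ P.toReal = ∑ t ∈ s, |a t| ^ P.toReal := by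
    intro a s
    have hpt : ∀ (h : lp (fun _ : ℕ => ℝ) P), ‖h‖ ^ P.toReal = ∑' i, ‖h i‖ ^ P.toReal :=
      fun h => lp.norm_rpow_eq_tsum hPt0 h
    rw [hpt]
    have hcoe : ∀ i : ℕ, (∑ t ∈ s, a t • u t) i = ∑ t ∈ s, a t * u t i := by
      intro i
      rw [lp.coeFn_sum]
      rw [Finset.sum_apply]
      apply Finset.sum_congr rfl
      intro t _
      rfl
    have hpointwise : ∀ i : ℕ, ‖(∑ t ∈ s, a t • u t) i‖ ^ P.toReal
        = ∑ t ∈ s, ‖a t * u t i‖ ^ P.toReal := by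
      intro i
      rw [hcoe i]
      by_cases hex : ∃ t₀ ∈ s, u t₀ i ≠ 0
      · obtain ⟨t₀, ht₀s, ht₀⟩ := hex
        have hothers : ∀ t ∈ s, t ≠ t₀ → u t i = 0 := by
          intro t hts hne
          rcases lt_or_gt_of_ne hne with h | h
          · by_contra h2
            exact ht₀ (hdisj t t₀ h i h2)
          · exact hdisj t₀ t h i ht₀
        have h1 : ∑ t ∈ s, a t * u t i = a t₀ * u t₀ i := by
          apply Finset.sum_eq_single t₀
          · intro t hts hne
            rw [hothers t hts hne]; ring
          · intro habs; exact absurd ht₀s habs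
        have h2 : ∑ t ∈ s, ‖a t * u t i‖ ^ P.toReal = ‖a t₀ * u t₀ i‖ ^ P.toReal := by
          apply Finset.sum_eq_single t₀
          · intro t hts hne
            rw [hothers t hts hne, mul_zero, norm_zero, Real.zero_rpow hPt0.ne']
          · intro habs; exact absurd ht₀s habs
        rw [h1, h2]
      · push_neg at hex
        have h1 : ∑ t ∈ s, a t * u t i = 0 := by
          apply Finset.sum_eq_zero
          intro t hts; rw [hex t hts]; ring
        have h2 : ∑ t ∈ s, ‖a t * u t i‖ ^ P.toReal = 0 := by
          apply Finset.sum_eq_zero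
          intro t hts; rw [hex t hts, mul_zero, norm_zero, Real.zero_rpow hPt0.ne']
        rw [h1, h2, norm_zero, Real.zero_rpow hPt0.ne']
    calc ∑' i, ‖(∑ t ∈ s, a t • u t) i‖ ^ P.toReal
        = ∑' i, ∑ t ∈ s, ‖a t * u t i‖ ^ P.toReal := by
          apply tsum_congr; exact hpointwise
      _ = ∑ t ∈ s, ∑' i, ‖a t * u t i‖ ^ P.toReal := by
          apply Summable.tsum_finsetSum
          intro t _
          have heq : ∀ i : ℕ, ‖a t * u t i‖ ^ P.toReal
              = |a t| ^ P.toReal * ‖u t i‖ ^ P.toReal := by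
            intro i
            rw [norm_mul, Real.mul_rpow (norm_nonneg _) (norm_nonneg _), Real.norm_eq_abs]
          exact (Summable.congr (((lp.memℓp (u t)).summable hPt0).mul_left
            (|a t| ^ P.toReal)) (fun i => (heq i).symm))
      _ = ∑ t ∈ s, |a t| ^ P.toReal := by
          apply Finset.sum_congr rfl
          intro t _
          have heq : ∀ i : ℕ, ‖a t * u t i‖ ^ P.toReal
              = |a t| ^ P.toReal * ‖u t i‖ ^ P.toReal := by
            intro i
            rw [norm_mul, Real.mul_rpow (norm_nonneg _) (norm_nonneg _), Real.norm_eq_abs]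
          calc ∑' i, ‖a t * u t i‖ ^ P.toReal
              = ∑' i, |a t| ^ P.toReal * ‖u t i‖ ^ P.toReal := tsum_congr heq
            _ = |a t| ^ P.toReal * ∑' i, ‖u t i‖ ^ P.toReal := tsum_mul_left
            _ = |a t| ^ P.toReal * ‖u t‖ ^ P.toReal := by rw [← lp.norm_rpow_eq_tsum hPt0]
            _ = |a t| ^ P.toReal := by rw [(spec t).2.2.2.1, Real.one_rpow, mul_one]
  -- Step 4 : the operator S
  have hsummable : ∀ a : lp (fun _ : ℕ => ℝ) P, Summable (fun t => a t • u t) := by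
    intro a
    rw [summable_iff_vanishing_norm]
    intro ε hε
    have hasum : Summable (fun t => ‖a t‖ ^ P.toReal) := (lp.memℓp a).summable hPt0
    obtain ⟨s₀, hs₀⟩ := summable_iff_vanishing_norm.mp hasum (ε ^ P.toReal)
      (Real.rpow_pos_of_pos hε _)
    refine ⟨s₀, fun t ht => ?_⟩
    have h1 : ‖∑ t' ∈ t, a t' • u t'‖ ^ P.toReal = ∑ t' ∈ t, |a t'| ^ P.toReal := key a t
    have h2 : ∑ t' ∈ t, |a t'| ^ P.toReal < ε ^ P.toReal := by
      have := hs₀ t ht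
      have hnn : 0 ≤ ∑ t' ∈ t, ‖a t'‖ ^ P.toReal :=
        Finset.sum_nonneg (fun i _ => Real.rpow_nonneg (norm_nonneg _) _)
      rw [Real.norm_of_nonneg hnn] at this
      simpa [Real.norm_eq_abs] using this
    have h3 : ‖∑ t' ∈ t, a t' • u t'‖ ^ P.toReal < ε ^ P.toReal := by rw [h1]; exact h2
    calc ‖∑ t' ∈ t, a t' • u t'‖
        = ((‖∑ t' ∈ t, a t' • u t'‖ ^ P.toReal)) ^ (1/P.toReal) := by
          rw [← Real.rpow_mul (norm_nonneg _), mul_one_div_cancel hPt0.ne', Real.rpow_one]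
      _ < (ε ^ P.toReal) ^ (1/P.toReal) := by
          apply Real.rpow_lt_rpow (Real.rpow_nonneg (norm_nonneg _) _) h3
          positivity
      _ = ε := by
          rw [← Real.rpow_mul hε.le, mul_one_div_cancel hPt0.ne', Real.rpow_one]
  set S : lp (fun _ : ℕ => ℝ) P → lp (fun _ : ℕ => ℝ) P := fun a => ∑' t, a t • u t with hS
  have hSnorm : ∀ a, ‖S a‖ = ‖a‖ := by
    intro a
    have h1 : Filter.Tendsto (fun s : Finset ℕ => ∑ t ∈ s, a t • u t) Filter.atTop
        (nhds (S a)) := (hsummable a).hasSum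
    have hcont : Continuous (fun z : lp (fun _ : ℕ => ℝ) P => ‖z‖ ^ P.toReal) :=
      Continuous.rpow_const continuous_norm (fun _ => Or.inr hPt0.le)
    have h2 : Filter.Tendsto (fun s : Finset ℕ => ‖∑ t ∈ s, a t • u t‖ ^ P.toReal)
        Filter.atTop (nhds (‖S a‖ ^ P.toReal)) := (hcont.tendsto _).comp h1
    have h3 : Filter.Tendsto (fun s : Finset ℕ => ∑ t ∈ s, |a t| ^ P.toReal)
        Filter.atTop (nhds (‖a‖ ^ P.toReal)) := by
      have h4 : HasSum (fun t => ‖a t‖ ^ P.toReal) (‖a‖ ^ P.toReal) := lp.hasSum_norm hPt0 a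
      have h5 : HasSum (fun t => |a t| ^ P.toReal) (‖a‖ ^ P.toReal) := by
        simpa [Real.norm_eq_abs] using h4
      exact h5
    have h6 : ‖S a‖ ^ P.toReal = ‖a‖ ^ P.toReal := by
      apply tendsto_nhds_unique _ h3
      have : (fun s : Finset ℕ => ‖∑ t ∈ s, a t • u t‖ ^ P.toReal)
          = (fun s : Finset ℕ => ∑ t ∈ s, |a t| ^ P.toReal) := by
        funext s; exact key a s
      rw [← this]
      exact h2
    exact Real.rpow_left_injOn hPt0.ne' (Set.mem_setOf.mpr (norm_nonneg _))
      (Set.mem_setOf.mpr (norm_nonneg _)) h6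
  have hSadd : ∀ a b, S (a + b) = S a + S b := by
    intro a b
    rw [hS]
    simp only
    have : (fun t => (a + b) t • u t) = fun t => a t • u t + b t • u t := by
      funext t
      rw [lp.coeFn_add]
      simp [add_smul]
    rw [this, Summable.tsum_add (hsummable a) (hsummable b)]
  have hSsmul : ∀ (r : ℝ) a, S (r • a) = r • S a := by
    intro r a
    rw [hS]
    simp only
    have : (fun t => (r • a) t • u t) = fun t => r • (a t • u t) := by
      funext t
      rw [lp.coeFn_smul]
      simp [smul_smul]
    rw [this, Summable.tsum_const_smul r (hsummable a)]
  -- Step 5 : bounds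
  have hP1S : ∀ a, ‖P₁ (S a)‖ ≤ (c/4) * ‖a‖ := by
    intro a
    have hmap : P₁ (S a) = ∑' t, P₁ (a t • u t) := P₁.map_tsum (hsummable a)
    have hterm : ∀ t, ‖P₁ (a t • u t)‖ ≤ ‖a‖ * ((c/4) * (1/2)^(t+1)) := by
      intro t
      rw [map_smul, norm_smul, Real.norm_eq_abs]
      have h1 : |a t| ≤ ‖a‖ := by
        have := lp.norm_apply_le_norm hPne a t
        simpa [Real.norm_eq_abs] using this
      have h2 : ‖P₁ (u t)‖ ≤ (c/4) * (1/2)^(t+1) := ((spec t).2.2.2.2).le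
      exact mul_le_mul h1 h2 (norm_nonneg _) (norm_nonneg _)
    have hgeo : Summable (fun t : ℕ => (1/2:ℝ)^(t+1)) := by
      have := (summable_geometric_of_lt_one (r := (1/2:ℝ)) (by norm_num)
        (by norm_num)).mul_left (1/2:ℝ)
      exact this.congr (fun t => by ring)
    have hgsum : Summable (fun t : ℕ => ‖a‖ * ((c/4) * (1/2:ℝ)^(t+1))) :=
      Summable.mul_left _ (Summable.mul_left _ hgeo)
    have hnsum : Summable (fun t => ‖P₁ (a t • u t)‖) := by
      apply Summable.of_nonneg_of_le (fun t => norm_nonneg _) hterm hgsum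
    calc ‖P₁ (S a)‖ = ‖∑' t, P₁ (a t • u t)‖ := by rw [hmap]
      _ ≤ ∑' t, ‖P₁ (a t • u t)‖ := norm_tsum_le_tsum_norm hnsum
      _ ≤ ∑' t : ℕ, ‖a‖ * ((c/4) * (1/2:ℝ)^(t+1)) := Summable.tsum_le_tsum hterm hnsum hgsum
      _ = ‖a‖ * (c/4) * ∑' t : ℕ, ((1/2:ℝ)^(t+1)) := by
          rw [← tsum_mul_left]
          apply tsum_congr; intro t; ring
      _ ≤ ‖a‖ * (c/4) * 1 := by
          apply mul_le_mul_of_nonneg_left _ (by positivity)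
          have h7 : ∑' t : ℕ, ((1/2:ℝ)^(t+1)) = 1 := by
            have h8 : ∀ t : ℕ, (1/2:ℝ)^(t+1) = (1/2) * (1/2)^t := fun t => by ring
            rw [tsum_congr h8, tsum_mul_left, tsum_geometric_two]
            norm_num
          rw [h7]
      _ = (c/4) * ‖a‖ := by ring
  have hlower : ∀ a, c * ‖a‖ ≤ ‖P₂ (S a)‖ := by
    intro a
    by_cases ha : a = 0
    · subst ha
      have : S 0 = 0 := by
        have := hSnorm 0
        rw [norm_zero] at this
        exact norm_eq_zero.mp this
      rw [this]
      simp
    · have hapos : 0 < ‖a‖ := norm_pos_iff.mpr ha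
      have h1 : c * ‖a‖ ≤ ‖Jc (S a)‖ := by
        calc c * ‖a‖ = c * ‖S a‖ := by rw [hSnorm]
          _ ≤ ‖J (S a)‖ := (hJ (S a)).2
          _ = ‖Jc (S a)‖ := by rw [hJcf]
      have h2 : ‖Jc (S a)‖ = max ‖P₁ (S a)‖ ‖P₂ (S a)‖ := by
        rw [Prod.norm_def]
        rfl
      rw [h2] at h1
      rcases max_cases ‖P₁ (S a)‖ ‖P₂ (S a)‖ with ⟨heq, _⟩ | ⟨heq, _⟩
      · exfalso
        have := hP1S a
        rw [heq] at h1
        nlinarith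
      · rw [heq] at h1
        exact h1
  have hupperY : ∀ a, ‖P₂ (S a)‖ ≤ C * ‖a‖ := by
    intro a
    have h1 : ‖P₂ (S a)‖ ≤ ‖Jc (S a)‖ := by
      have h2 : ‖Jc (S a)‖ = max ‖P₁ (S a)‖ ‖P₂ (S a)‖ := by
        rw [Prod.norm_def]; rfl
      rw [h2]
      exact le_max_right _ _
    calc ‖P₂ (S a)‖ ≤ ‖Jc (S a)‖ := h1
      _ = ‖J (S a)‖ := by rw [hJcf]
      _ ≤ C * ‖S a‖ := (hJ (S a)).1
      _ = C * ‖a‖ := by rw [hSnorm]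
  refine ⟨{ toFun := fun a => P₂ (S a)
            map_add' := ?_
            map_smul' := ?_ }, C, c, hc, fun f => ⟨hupperY f, hlower f⟩⟩
  · intro a b
    show P₂ (S (a + b)) = P₂ (S a) + P₂ (S b)
    rw [hSadd, map_add]
  · intro r a
    show P₂ (S (r • a)) = r • P₂ (S a)
    rw [hSsmul, map_smul]


theorem statement12 {X Y : Type*} [NormedAddCommGroup X] [NormedSpace ℝ X] [CompleteSpace X]
    [NormedAddCommGroup Y] [NormedSpace ℝ Y] [CompleteSpace Y]
    (p q : ℝ) (hq : 1 ≤ q) (hqp : q < p)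
    (e : ℕ → X) (he : IsUncondBasis e) (hlow : LowerEstimate e q)
    (y : ℕ → Y) (hy : IsUncondBasis y) (hup : UpperEstimate y q) :
    ContainsLp (X × Y) p ↔ ContainsLp Y p := by
  constructor
  · exact fun h => forwardDir p q hq hqp e he hlow h
  · intro h
    obtain ⟨J, C, c, hc, hJ⟩ := h
    refine ⟨(LinearMap.inr ℝ X Y).comp J, C, c, hc, fun f => ?_⟩
    have hn : ‖((LinearMap.inr ℝ X Y).comp J) f‖ = ‖J f‖ := by
      show ‖((0 : X), J f)‖ = ‖J f‖
      rw [Prod.norm_def]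
      simp [max_eq_right (norm_nonneg (J f))]
    rw [hn]
    exact hJ f
end

section
/- Let (X_i)_{i∈I} be a finite family of real Banach spaces and let (I_j)_{j∈J} be a partition of I. Suppose that for each j ∈ J the family (X_i)_{i∈I_j} is splitting for unconditional bases, and that the family (∏_{i∈I_j} X_i)_{j∈J} is splitting for unconditional bases. Then the family (X_i)_{i∈I} is splitting for unconditional bases. -/
open scoped BigOperators

set_option linter.unusedSectionVars false
set_option maxHeartbeats 1000000
set_option synthInstance.maxHeartbeats 400000

open Filter Topology

namespace UB

instance : Fact ((1:ENNReal) ≤ ⊤) := ⟨le_top⟩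

variable {X : Type*} [NormedAddCommGroup X] [NormedSpace ℝ X]


lemma bdd_partial_sums {f : ℕ → X} {x : X} (h : HasSum f x) :
    BddAbove (Set.range fun F : Finset ℕ => ‖∑ n ∈ F, f n‖) := by
  have h' := h
  rw [HasSum, Metric.tendsto_nhds] at h'
  obtain ⟨F₀, hF₀⟩ := (Filter.eventually_atTop).1 (h' 1 one_pos)
  refine ⟨‖x‖ + 1 + ∑ n ∈ F₀, ‖f n‖, ?_⟩
  rintro r ⟨F, rfl⟩
  have hsplit : ∑ n ∈ F ∪ F₀, f n = ∑ n ∈ F, f n + ∑ n ∈ F₀ \ F, f n := by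
    rw [← Finset.sum_union (Finset.disjoint_sdiff)]
    congr 1
    rw [Finset.union_sdiff_self_eq_union]
  have h1 : ‖∑ n ∈ F ∪ F₀, f n‖ ≤ ‖x‖ + 1 := by
    have := hF₀ (F ∪ F₀) Finset.subset_union_right
    rw [dist_eq_norm] at this
    calc ‖∑ n ∈ F ∪ F₀, f n‖ = ‖(∑ n ∈ F ∪ F₀, f n - x) + x‖ := by rw [sub_add_cancel]
    _ ≤ ‖∑ n ∈ F ∪ F₀, f n - x‖ + ‖x‖ := norm_add_le _ _
    _ ≤ ‖x‖ + 1 := by linarith [le_of_lt this]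
  have h2 : ‖∑ n ∈ F₀ \ F, f n‖ ≤ ∑ n ∈ F₀, ‖f n‖ := by
    calc ‖∑ n ∈ F₀ \ F, f n‖ ≤ ∑ n ∈ F₀ \ F, ‖f n‖ := norm_sum_le _ _
    _ ≤ ∑ n ∈ F₀, ‖f n‖ :=
      Finset.sum_le_sum_of_subset_of_nonneg (Finset.sdiff_subset) (fun _ _ _ => norm_nonneg _)
  have : ∑ n ∈ F, f n = ∑ n ∈ F ∪ F₀, f n - ∑ n ∈ F₀ \ F, f n := by rw [hsplit]; abel
  show ‖∑ n ∈ F, f n‖ ≤ _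
  rw [this]
  calc ‖∑ n ∈ F ∪ F₀, f n - ∑ n ∈ F₀ \ F, f n‖ ≤ ‖∑ n ∈ F ∪ F₀, f n‖ + ‖∑ n ∈ F₀ \ F, f n‖ :=
    norm_sub_le _ _
  _ ≤ ‖x‖ + 1 + ∑ n ∈ F₀, ‖f n‖ := by linarith

lemma linearIndependent (e : ℕ → X) (h : IsUncondBasis e) : LinearIndependent ℝ e := by
  rw [linearIndependent_iff']
  intro s g hg i hi
  classical
  set a : ℕ → ℝ := fun n => if n ∈ s then g n else 0 with ha
  have hsum : HasSum (fun n => a n • e n) 0 := by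
    have : HasSum (fun n => a n • e n) (∑ n ∈ s, a n • e n) := by
      apply hasSum_sum_of_ne_finset_zero
      intro n hn
      simp [ha, if_neg hn]
    have hz : (∑ n ∈ s, a n • e n) = 0 := by
      rw [← hg]; apply Finset.sum_congr rfl; intro n hn; simp [ha, if_pos hn]
    rwa [hz] at this
  have h0 : HasSum (fun n => (0:ℝ) • e n) (0:X) := by
    simpa using (hasSum_zero : HasSum (fun _ : ℕ => (0:X)) 0)
  have := (h.2 0).unique hsum h0
  have hai : a i = 0 := by rw [this]
  rw [ha] at hai
  simpa [if_pos hi] using hai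



/-- coefficients of the expansion -/
noncomputable def coef (e : ℕ → X) (h : IsUncondBasis e) (x : X) : ℕ → ℝ :=
  (h.2 x).choose

lemma coef_hasSum (e : ℕ → X) (h : IsUncondBasis e) (x : X) :
    HasSum (fun n => coef e h x n • e n) x := (h.2 x).choose_spec.1

lemma coef_unique (e : ℕ → X) (h : IsUncondBasis e) {x : X} {a : ℕ → ℝ}
    (ha : HasSum (fun n => a n • e n) x) : a = coef e h x :=
  (h.2 x).choose_spec.2 a ha

lemma coef_add (e : ℕ → X) (h : IsUncondBasis e) (x y : X) :
    coef e h (x + y) = coef e h x + coef e h y := by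
  symm
  apply coef_unique
  have := (coef_hasSum e h x).add (coef_hasSum e h y)
  simpa [add_smul] using this

lemma coef_smul (e : ℕ → X) (h : IsUncondBasis e) (c : ℝ) (x : X) :
    coef e h (c • x) = c • coef e h x := by
  symm
  apply coef_unique
  have := (coef_hasSum e h x).const_smul c
  simpa [smul_smul] using this

variable [CompleteSpace X]

/-- The Banach space of "partial sum functions". -/
noncomputable def expSub (e : ℕ → X) : Submodule ℝ (lp (fun _ : Finset ℕ => X) ⊤) where
  carrier := {g | (∀ F : Finset ℕ, (g : ∀ _ : Finset ℕ, X) F = ∑ n ∈ F, (g : ∀ _ : Finset ℕ, X) {n})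
      ∧ (∀ n : ℕ, (g : ∀ _ : Finset ℕ, X) {n} ∈ Submodule.span ℝ {e n})
      ∧ ∃ x : X, Tendsto (fun F => (g : ∀ _ : Finset ℕ, X) F) atTop (nhds x)}
  add_mem' := by
    rintro g g' ⟨hg1, hg2, x, hg3⟩ ⟨hg'1, hg'2, x', hg'3⟩
    refine ⟨fun F => ?_, fun n => ?_, ⟨x + x', ?_⟩⟩
    · simp only [lp.coeFn_add, Pi.add_apply, hg1 F, hg'1 F, Finset.sum_add_distrib]
    · simp only [lp.coeFn_add, Pi.add_apply]
      exact Submodule.add_mem _ (hg2 n) (hg'2 n)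
    · simp only [lp.coeFn_add, Pi.add_apply]
      exact hg3.add hg'3
  zero_mem' := by
    refine ⟨fun F => ?_, fun n => ?_, ⟨0, ?_⟩⟩
    · simp [lp.coeFn_zero]
    · simp [lp.coeFn_zero]
    · simp only [lp.coeFn_zero, Pi.zero_apply]
      exact tendsto_const_nhds
  smul_mem' := by
    rintro c g ⟨hg1, hg2, x, hg3⟩
    refine ⟨fun F => ?_, fun n => ?_, ⟨c • x, ?_⟩⟩
    · simp only [lp.coeFn_smul, Pi.smul_apply, hg1 F, Finset.smul_sum]
    · simp only [lp.coeFn_smul, Pi.smul_apply]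
      exact Submodule.smul_mem _ c (hg2 n)
    · simp only [lp.coeFn_smul, Pi.smul_apply]
      exact hg3.const_smul c

lemma mem_expSub (e : ℕ → X) (g : lp (fun _ : Finset ℕ => X) ⊤) :
    g ∈ expSub e ↔ (∀ F : Finset ℕ, (g : ∀ _ : Finset ℕ, X) F = ∑ n ∈ F, (g : ∀ _ : Finset ℕ, X) {n})
      ∧ (∀ n : ℕ, (g : ∀ _ : Finset ℕ, X) {n} ∈ Submodule.span ℝ {e n})
      ∧ ∃ x : X, Tendsto (fun F => (g : ∀ _ : Finset ℕ, X) F) atTop (nhds x) := Iff.rfl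

lemma isClosed_expSub (e : ℕ → X) : IsClosed ((expSub e : Submodule ℝ _) : Set (lp (fun _ : Finset ℕ => X) ⊤)) := by
  apply IsSeqClosed.isClosed
  intro gk g hgk hlim
  have happ : ∀ F : Finset ℕ, Tendsto (fun k => (gk k : ∀ _ : Finset ℕ, X) F) atTop (nhds ((g : ∀ _ : Finset ℕ, X) F)) := by
    intro F
    rw [tendsto_iff_norm_sub_tendsto_zero]
    have hb : ∀ k, ‖(gk k : ∀ _ : Finset ℕ, X) F - (g : ∀ _ : Finset ℕ, X) F‖ ≤ ‖gk k - g‖ := by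
      intro k
      have := lp.norm_apply_le_norm (E := fun _ : Finset ℕ => X) ENNReal.top_ne_zero (gk k - g) F
      simpa [lp.coeFn_sub] using this
    have hn : Tendsto (fun k => ‖gk k - g‖) atTop (nhds 0) := by
      rw [← tendsto_iff_norm_sub_tendsto_zero]
      exact hlim
    exact squeeze_zero (fun k => norm_nonneg _) hb hn
  refine ⟨fun F => ?_, fun n => ?_, ?_⟩
  · -- partial sum property passes to the limit
    refine tendsto_nhds_unique (happ F) ?_
    have : Tendsto (fun k => ∑ n ∈ F, (gk k : ∀ _ : Finset ℕ, X) {n}) atTop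
        (nhds (∑ n ∈ F, (g : ∀ _ : Finset ℕ, X) {n})) :=
      tendsto_finset_sum _ (fun n _ => happ {n})
    refine this.congr ?_
    intro k
    exact ((hgk k).1 F).symm
  · exact (Submodule.span ℝ {e n}).closed_of_finiteDimensional.mem_of_tendsto (happ {n})
      (Filter.Eventually.of_forall (fun k => (hgk k).2.1 n))
  · -- existence of the limit
    set x : ℕ → X := fun k => ((hgk k).2.2).choose with hx
    have hxk : ∀ k, Tendsto (fun F => (gk k : ∀ _ : Finset ℕ, X) F) atTop (nhds (x k)) :=
      fun k => ((hgk k).2.2).choose_spec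
    have hdist : ∀ k l, ‖x k - x l‖ ≤ ‖gk k - gk l‖ := by
      intro k l
      have ht : Tendsto (fun F => ‖(gk k : ∀ _ : Finset ℕ, X) F - (gk l : ∀ _ : Finset ℕ, X) F‖)
          atTop (nhds ‖x k - x l‖) := ((hxk k).sub (hxk l)).norm
      refine le_of_tendsto ht (Filter.Eventually.of_forall (fun F => ?_))
      have := lp.norm_apply_le_norm (E := fun _ : Finset ℕ => X) ENNReal.top_ne_zero (gk k - gk l) F
      simpa [lp.coeFn_sub] using this
    have hcauchy : CauchySeq x := by
      rw [Metric.cauchySeq_iff]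
      intro ε hε
      have := (hlim.cauchySeq)
      rw [Metric.cauchySeq_iff] at this
      obtain ⟨K, hK⟩ := this ε hε
      refine ⟨K, fun k hk l hl => ?_⟩
      have := hK k hk l hl
      rw [dist_eq_norm] at this ⊢
      calc ‖x k - x l‖ ≤ ‖gk k - gk l‖ := hdist k l
      _ < ε := this
    obtain ⟨y, hy⟩ := cauchySeq_tendsto_of_complete hcauchy
    refine ⟨y, ?_⟩
    rw [Metric.tendsto_nhds]
    intro ε hε
    have h3 : (0:ℝ) < ε / 3 := by linarith
    have e1 : ∀ᶠ k in atTop, dist (gk k) g < ε/3 := Metric.tendsto_nhds.1 hlim (ε/3) h3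
    have e2 : ∀ᶠ k in atTop, dist (x k) y < ε/3 := Metric.tendsto_nhds.1 hy (ε/3) h3
    obtain ⟨k, hk1, hk2⟩ := (e1.and e2).exists
    have e4 : ∀ᶠ F in atTop, dist ((gk k : ∀ _ : Finset ℕ, X) F) (x k) < ε/3 :=
      Metric.tendsto_nhds.1 (hxk k) (ε/3) h3
    refine e4.mono (fun F hF => ?_)
    have hb : dist ((g : ∀ _ : Finset ℕ, X) F) ((gk k : ∀ _ : Finset ℕ, X) F) ≤ dist g (gk k) := by
      rw [dist_eq_norm, dist_eq_norm]
      have := lp.norm_apply_le_norm (E := fun _ : Finset ℕ => X) ENNReal.top_ne_zero (g - gk k) F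
      simpa [lp.coeFn_sub] using this
    have hb2 : dist g (gk k) < ε/3 := by rw [dist_comm]; exact hk1
    calc dist ((g : ∀ _ : Finset ℕ, X) F) y
        ≤ dist ((g : ∀ _ : Finset ℕ, X) F) ((gk k : ∀ _ : Finset ℕ, X) F)
          + dist ((gk k : ∀ _ : Finset ℕ, X) F) (x k) + dist (x k) y := dist_triangle4 _ _ _ _
    _ < ε/3 + ε/3 + ε/3 := by linarith [lt_of_le_of_lt hb hb2]
    _ = ε := by ring

noncomputable def preSum (e : ℕ → X) (g : expSub e) : X :=
  (((mem_expSub e g.1).1 g.2).2.2).choose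

lemma preSum_tendsto (e : ℕ → X) (g : expSub e) :
    Tendsto (fun F => ((g : lp (fun _ : Finset ℕ => X) ⊤) : ∀ _ : Finset ℕ, X) F) atTop
      (nhds (preSum e g)) :=
  (((mem_expSub e g.1).1 g.2).2.2).choose_spec

lemma norm_coe_expSub (e : ℕ → X) (g : expSub e) :
    ‖(g : lp (fun _ : Finset ℕ => X) ⊤)‖ = ‖g‖ := rfl

noncomputable def expSum (e : ℕ → X) : expSub e →L[ℝ] X :=
  LinearMap.mkContinuous
    { toFun := preSum e
      map_add' := by
        intro g g'
        refine tendsto_nhds_unique (preSum_tendsto e (g + g')) ?_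
        have := (preSum_tendsto e g).add (preSum_tendsto e g')
        refine this.congr (fun F => ?_)
        simp [lp.coeFn_add]
      map_smul' := by
        intro c g
        refine tendsto_nhds_unique (preSum_tendsto e (c • g)) ?_
        have := (preSum_tendsto e g).const_smul c
        refine this.congr (fun F => ?_)
        simp [lp.coeFn_smul] }
    1
    (by
      intro g
      refine le_of_tendsto (preSum_tendsto e g).norm (Filter.Eventually.of_forall (fun F => ?_))
      have := lp.norm_apply_le_norm (E := fun _ : Finset ℕ => X) ENNReal.top_ne_zero
        (g : lp (fun _ : Finset ℕ => X) ⊤) F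
      rw [norm_coe_expSub] at this
      simpa using this)

lemma expSum_apply (e : ℕ → X) (g : expSub e) : expSum e g = preSum e g := rfl

/-- the element of `expSub e` associated to `x`. -/
noncomputable def coefG (e : ℕ → X) (h : IsUncondBasis e) (x : X) :
    lp (fun _ : Finset ℕ => X) ⊤ :=
  ⟨fun F => ∑ n ∈ F, coef e h x n • e n, memℓp_infty (bdd_partial_sums (coef_hasSum e h x))⟩

lemma coefG_apply (e : ℕ → X) (h : IsUncondBasis e) (x : X) (F : Finset ℕ) :
    (coefG e h x : ∀ _ : Finset ℕ, X) F = ∑ n ∈ F, coef e h x n • e n := rfl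

lemma coefG_mem (e : ℕ → X) (h : IsUncondBasis e) (x : X) : coefG e h x ∈ expSub e := by
  refine ⟨fun F => ?_, fun n => ?_, ⟨x, ?_⟩⟩
  · simp [coefG_apply, Finset.sum_singleton]
  · rw [coefG_apply, Finset.sum_singleton, Submodule.mem_span_singleton]
    exact ⟨_, rfl⟩
  · exact coef_hasSum e h x

lemma expSum_coefG (e : ℕ → X) (h : IsUncondBasis e) (x : X) :
    expSum e ⟨coefG e h x, coefG_mem e h x⟩ = x := by
  rw [expSum_apply]
  exact tendsto_nhds_unique (preSum_tendsto e _) (coef_hasSum e h x)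

lemma expSum_zero_imp (e : ℕ → X) (h : IsUncondBasis e) (g : expSub e)
    (hg : expSum e g = 0) : g = 0 := by
  obtain ⟨hg1, hg2, -⟩ := (mem_expSub e g.1).1 g.2
  have htend : Tendsto (fun F => ((g : lp (fun _ : Finset ℕ => X) ⊤) : ∀ _ : Finset ℕ, X) F)
      atTop (nhds 0) := by
    rw [expSum_apply] at hg
    rw [← hg]
    exact preSum_tendsto e g
  choose c hc using fun n => Submodule.mem_span_singleton.1 (hg2 n)
  have hsum : HasSum (fun n => c n • e n) 0 := by
    have heq : ∀ F : Finset ℕ, ∑ n ∈ F, c n • e n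
        = ((g : lp (fun _ : Finset ℕ => X) ⊤) : ∀ _ : Finset ℕ, X) F := by
      intro F
      rw [hg1 F]
      exact Finset.sum_congr rfl (fun n _ => hc n)
    exact htend.congr (fun F => (heq F).symm)
  have h0 : HasSum (fun n => (0:ℝ) • e n) (0:X) := by
    simpa using (hasSum_zero : HasSum (fun _ : ℕ => (0:X)) 0)
  have hc0 : c = fun _ => (0:ℝ) := ExistsUnique.unique (h.2 0) hsum h0
  have hzero : ∀ n : ℕ, ((g : lp (fun _ : Finset ℕ => X) ⊤) : ∀ _ : Finset ℕ, X) {n} = 0 := by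
    intro n
    rw [← hc n, hc0]
    simp
  apply Subtype.ext
  apply lp.ext
  funext F
  have h00 : ((0 : expSub e) : lp (fun _ : Finset ℕ => X) ⊤) = 0 := rfl
  rw [h00, lp.coeFn_zero, Pi.zero_apply, hg1 F]
  exact Finset.sum_eq_zero (fun n _ => hzero n)

lemma expSum_injective (e : ℕ → X) (h : IsUncondBasis e) :
    Function.Injective (expSum e) :=
  (injective_iff_map_eq_zero (expSum e)).2 (fun g hg => expSum_zero_imp e h g hg)

lemma expSum_surjective (e : ℕ → X) (h : IsUncondBasis e) :
    Function.Surjective (expSum e) :=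
  fun x => ⟨⟨coefG e h x, coefG_mem e h x⟩, expSum_coefG e h x⟩

noncomputable def expEquiv (e : ℕ → X) (h : IsUncondBasis e) : expSub e ≃L[ℝ] X := by
  haveI : CompleteSpace (expSub e) := (isClosed_expSub e).completeSpace_coe
  exact ContinuousLinearEquiv.ofBijective (expSum e)
    (LinearMap.ker_eq_bot.2 (expSum_injective e h))
    (LinearMap.range_eq_top.2 (expSum_surjective e h))

lemma coef_bound (e : ℕ → X) (h : IsUncondBasis e) (m : ℕ) :
    ∃ C : ℝ, ∀ x : X, |coef e h x m| * ‖e m‖ ≤ C * ‖x‖ := by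
  haveI : CompleteSpace (expSub e) := (isClosed_expSub e).completeSpace_coe
  refine ⟨‖((expEquiv e h).symm : X →L[ℝ] expSub e)‖, fun x => ?_⟩
  have hsymm : (expEquiv e h).symm x = ⟨coefG e h x, coefG_mem e h x⟩ := by
    apply expSum_injective e h
    rw [expSum_coefG e h x]
    have : expSum e ((expEquiv e h).symm x) = (expEquiv e h) ((expEquiv e h).symm x) := rfl
    rw [this, ContinuousLinearEquiv.apply_symm_apply]
  have h1 : ‖(coefG e h x : ∀ _ : Finset ℕ, X) {m}‖ ≤ ‖(expEquiv e h).symm x‖ := by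
    rw [hsymm]
    have := lp.norm_apply_le_norm (E := fun _ : Finset ℕ => X) ENNReal.top_ne_zero
      (coefG e h x) {m}
    exact this
  rw [coefG_apply, Finset.sum_singleton, norm_smul, Real.norm_eq_abs] at h1
  calc |coef e h x m| * ‖e m‖ ≤ ‖(expEquiv e h).symm x‖ := h1
  _ ≤ ‖((expEquiv e h).symm : X →L[ℝ] expSub e)‖ * ‖x‖ :=
    ((expEquiv e h).symm : X →L[ℝ] expSub e).le_opNorm x

/-- the coefficient functional, as a linear map -/
noncomputable def coefLM (e : ℕ → X) (h : IsUncondBasis e) (m : ℕ) : X →ₗ[ℝ] ℝ where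
  toFun x := coef e h x m
  map_add' x y := by
    show coef e h (x + y) m = coef e h x m + coef e h y m
    rw [coef_add]; rfl
  map_smul' c x := by
    show coef e h (c • x) m = c * coef e h x m
    rw [coef_smul]; rfl

lemma coef_support (e : ℕ → X) (h : IsUncondBasis e) (N : Set ℕ) {x : X}
    (hx : x ∈ (Submodule.span ℝ (e '' N)).topologicalClosure) {m : ℕ} (hm : m ∉ N) :
    coef e h x m = 0 := by
  obtain ⟨C, hC⟩ := coef_bound e h m
  have hem : (0:ℝ) < ‖e m‖ := norm_pos_iff.2 (h.1 m)
  have hbound : ∀ y : X, ‖coefLM e h m y‖ ≤ (C / ‖e m‖) * ‖y‖ := by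
    intro y
    have := hC y
    rw [Real.norm_eq_abs]
    show |coef e h y m| ≤ _
    rw [div_mul_eq_mul_div, le_div_iff₀ hem]
    calc |coef e h y m| * ‖e m‖ ≤ C * ‖y‖ := this
    _ = C * ‖y‖ * 1 := by ring
    _ ≤ C * ‖y‖ := by linarith
  have hbound' : ∀ y : X, ‖coefLM e h m y‖ ≤ (C / ‖e m‖) * ‖y‖ := hbound
  set Ψ : X →L[ℝ] ℝ := LinearMap.mkContinuous (coefLM e h m) (C / ‖e m‖) hbound' with hΨ
  have hker : Submodule.span ℝ (e '' N) ≤ LinearMap.ker (Ψ : X →ₗ[ℝ] ℝ) := by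
    rw [Submodule.span_le]
    rintro _ ⟨n, hn, rfl⟩
    have hmn : m ≠ n := fun hmn => hm (hmn ▸ hn)
    have hfun : (fun k => (if k = n then (1:ℝ) else 0) • e k)
        = (fun k => if k = n then e n else 0) := by
      funext k
      by_cases hk : k = n
      · subst hk; simp
      · simp [hk]
    have hsingle : HasSum (fun k => (if k = n then (1:ℝ) else 0) • e k) (e n) := by
      rw [hfun]
      exact hasSum_ite_eq n (e n)
    have hcoef : coef e h (e n) = fun k => if k = n then (1:ℝ) else 0 :=
      (coef_unique e h hsingle).symm
    refine SetLike.mem_coe.2 (LinearMap.mem_ker.2 ?_)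
    show coef e h (e n) m = 0
    rw [hcoef]
    simp [hmn]
  have hclosed : IsClosed ((LinearMap.ker (Ψ : X →ₗ[ℝ] ℝ) : Submodule ℝ X) : Set X) :=
    ContinuousLinearMap.isClosed_ker Ψ
  have := Submodule.topologicalClosure_minimal _ hker hclosed hx
  have hΨx : Ψ x = 0 := this
  exact hΨx


section Restrict

variable [CompleteSpace X]

lemma mem_Yr (e : ℕ → X) (k : ℕ → ℕ) (n : ℕ) :
    e (k n) ∈ (Submodule.span ℝ (e '' Set.range k)).topologicalClosure :=
  Submodule.le_topologicalClosure _ (Submodule.subset_span ⟨k n, ⟨n, rfl⟩, rfl⟩)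

noncomputable def restr (e : ℕ → X) (k : ℕ → ℕ) (n : ℕ) :
    (Submodule.span ℝ (e '' Set.range k)).topologicalClosure :=
  ⟨e (k n), mem_Yr e k n⟩

lemma restrict_basis (e : ℕ → X) (h : IsUncondBasis e) (k : ℕ → ℕ)
    (hk : Function.Injective k) : IsUncondBasis (restr e k) := by
  classical
  constructor
  · intro n hn
    exact h.1 (k n) (congrArg Subtype.val hn)
  · intro y
    have hasup : ∀ m, m ∉ Set.range k → coef e h (y : X) m = 0 :=
      fun m hm => coef_support e h (Set.range k) y.2 hm
    have hX : HasSum (fun m => coef e h (y : X) m • e m) (y : X) := coef_hasSum e h (y : X)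
    have hXk : HasSum (fun n => coef e h (y : X) (k n) • e (k n)) (y : X) :=
      (Function.Injective.hasSum_iff hk
        (f := fun m => coef e h (y : X) m • e m)
        (fun m hm => by simp [hasup m hm])).2 hX
    have hcoe : ∀ (b : ℕ → ℝ) (F : Finset ℕ),
        ((∑ n ∈ F, b n • restr e k n :
          (Submodule.span ℝ (e '' Set.range k)).topologicalClosure) : X)
        = ∑ n ∈ F, b n • e (k n) := by
      intro b F
      rw [AddSubmonoidClass.coe_finset_sum]
      rfl
    refine ⟨fun n => coef e h (y : X) (k n), ?_, ?_⟩
    · show Filter.Tendsto _ Filter.atTop _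
      rw [tendsto_subtype_rng]
      exact hXk.congr (fun F => (hcoe _ F).symm)
    · intro b hb
      have hbX : HasSum (fun n => b n • e (k n)) (y : X) := by
        show Filter.Tendsto _ Filter.atTop _
        exact (tendsto_subtype_rng.1 hb).congr (fun F => hcoe b F)
      set B : ℕ → ℝ := fun m => if hm : ∃ n, k n = m then b hm.choose else 0 with hB
      have hBk : ∀ n, B (k n) = b n := by
        intro n
        have hex : ∃ n', k n' = k n := ⟨n, rfl⟩
        have hch : hex.choose = n := hk hex.choose_spec
        simp only [hB, dif_pos hex, hch]
      have hB0 : ∀ m, m ∉ Set.range k → B m = 0 := by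
        intro m hm
        have : ¬ ∃ n, k n = m := fun ⟨n, hn⟩ => hm ⟨n, hn⟩
        simp only [hB, dif_neg this]
      have hBsum : HasSum (fun m => B m • e m) (y : X) := by
        refine (Function.Injective.hasSum_iff hk
          (f := fun m => B m • e m) (fun m hm => by simp [hB0 m hm])).1 ?_
        have : ((fun m => B m • e m) ∘ k) = fun n => b n • e (k n) := by
          funext n
          simp [Function.comp, hBk n]
        rw [this]
        exact hbX
      have hBa : B = coef e h (y : X) := coef_unique e h hBsum
      funext n
      rw [← hBk n, hBa]

end Restrict

section Transport

variable {Y Z : Type*} [NormedAddCommGroup Y] [NormedSpace ℝ Y]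
  [NormedAddCommGroup Z] [NormedSpace ℝ Z]

lemma basis_map (T : Y ≃L[ℝ] Z) (E : ℕ → Y) (hE : IsUncondBasis E) :
    IsUncondBasis (fun n => T (E n)) := by
  constructor
  · intro n h0
    apply hE.1 n
    have := congrArg T.symm h0
    simpa using this
  · intro z
    obtain ⟨a, ha, hu⟩ := hE.2 (T.symm z)
    refine ⟨a, ?_, ?_⟩
    · have := (T : Y →L[ℝ] Z).hasSum ha
      simp only [map_smul] at this
      simpa [T.apply_symm_apply] using this
    · intro b hb
      apply hu
      have := (T.symm : Z →L[ℝ] Y).hasSum hb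
      simp only [map_smul] at this
      simpa [T.symm_apply_apply] using this

noncomputable def eqCLE {p q : Submodule ℝ Z} (h : p = q) : p ≃L[ℝ] q := by
  subst h
  exact ContinuousLinearEquiv.refl ℝ p

lemma mem_span_closure_image (T : Y ≃L[ℝ] Z) (s : Set Y) {x : Y}
    (hx : x ∈ (Submodule.span ℝ s).topologicalClosure) :
    T x ∈ (Submodule.span ℝ (T '' s)).topologicalClosure := by
  rw [← SetLike.mem_coe, Submodule.topologicalClosure_coe] at hx ⊢
  have h1 : (T : Y → Z) '' ((Submodule.span ℝ s : Submodule ℝ Y) : Set Y)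
      = ((Submodule.span ℝ ((T : Y → Z) '' s) : Submodule ℝ Z) : Set Z) := by
    calc (T : Y → Z) '' ((Submodule.span ℝ s : Submodule ℝ Y) : Set Y)
        = ↑(Submodule.map (T.toLinearEquiv.toLinearMap) (Submodule.span ℝ s)) :=
          (Submodule.map_coe _ _).symm
      _ = ((Submodule.span ℝ ((T : Y → Z) '' s) : Submodule ℝ Z) : Set Z) := by
          rw [Submodule.map_span]
          rfl
  have h2 : T x ∈ closure ((T : Y → Z) '' ((Submodule.span ℝ s : Submodule ℝ Y) : Set Y)) :=
    image_closure_subset_closure_image T.continuous ⟨x, hx, rfl⟩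
  rwa [h1] at h2

lemma mem_span_closure_preimage (T : Y ≃L[ℝ] Z) (s : Set Y) {y : Z}
    (hy : y ∈ (Submodule.span ℝ ((T : Y → Z) '' s)).topologicalClosure) :
    T.symm y ∈ (Submodule.span ℝ s).topologicalClosure := by
  have h2 := mem_span_closure_image T.symm ((T : Y → Z) '' s) hy
  have h3 : (T.symm : Z → Y) '' ((T : Y → Z) '' s) = s := by
    rw [← Set.image_comp]
    have h4 : ((T.symm : Z → Y) ∘ (T : Y → Z)) = id := by
      funext u
      simp
    rw [h4, Set.image_id]
  rwa [h3] at h2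

noncomputable def spanCLE (T : Y ≃L[ℝ] Z) (s : Set Y) :
    (Submodule.span ℝ s).topologicalClosure ≃L[ℝ]
      (Submodule.span ℝ ((T : Y → Z) '' s)).topologicalClosure :=
  ContinuousLinearEquiv.equivOfInverse
    (ContinuousLinearMap.mk
      { toFun := fun x => ⟨T x.1, mem_span_closure_image T s x.2⟩
        map_add' := fun x y => Subtype.ext (by simp)
        map_smul' := fun c x => Subtype.ext (by simp) }
      ((T.continuous.comp continuous_subtype_val).subtype_mk _))
    (ContinuousLinearMap.mk
      { toFun := fun y => ⟨T.symm y.1, mem_span_closure_preimage T s y.2⟩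
        map_add' := fun x y => Subtype.ext (by simp)
        map_smul' := fun c x => Subtype.ext (by simp) }
      ((T.symm.continuous.comp continuous_subtype_val).subtype_mk _))
    (fun x => Subtype.ext (by simp))
    (fun y => Subtype.ext (by simp))

lemma spanCLE_apply (T : Y ≃L[ℝ] Z) (s : Set Y)
    (x : (Submodule.span ℝ s).topologicalClosure) :
    ((spanCLE T s x : (Submodule.span ℝ ((T : Y → Z) '' s)).topologicalClosure) : Z)
      = T (x : Y) := rfl

end Transport

section Sub

variable {Z : Type*} [NormedAddCommGroup Z] [NormedSpace ℝ Z]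

lemma sub_span_coe (Y : Submodule ℝ Z) (s : Set Y) :
    (Subtype.val '' ((Submodule.span ℝ s : Submodule ℝ Y) : Set Y))
      = ((Submodule.span ℝ (Subtype.val '' s) : Submodule ℝ Z) : Set Z) := by
  have h1 := Submodule.map_coe Y.subtype (Submodule.span ℝ s)
  have h2 := Submodule.map_span Y.subtype s
  rw [h2] at h1
  rw [Submodule.coe_subtype] at h1
  exact h1.symm

lemma mem_sub_closure (Y : Submodule ℝ Z) (s : Set Y) {x : Y}
    (hx : x ∈ (Submodule.span ℝ s).topologicalClosure) :
    (x : Z) ∈ (Submodule.span ℝ (Subtype.val '' s)).topologicalClosure := by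
  rw [← SetLike.mem_coe, Submodule.topologicalClosure_coe] at hx ⊢
  have h2 : (x : Z) ∈ closure (Subtype.val '' ((Submodule.span ℝ s : Submodule ℝ Y) : Set Y)) :=
    image_closure_subset_closure_image continuous_subtype_val ⟨x, hx, rfl⟩
  rwa [sub_span_coe] at h2

lemma mem_sub_Y (Y : Submodule ℝ Z) (hY : IsClosed (Y : Set Z)) (s : Set Y) {z : Z}
    (hz : z ∈ (Submodule.span ℝ (Subtype.val '' s)).topologicalClosure) : z ∈ Y := by
  rw [← SetLike.mem_coe, Submodule.topologicalClosure_coe] at hz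
  have hle : Submodule.span ℝ (Subtype.val '' s) ≤ Y :=
    Submodule.span_le.2 (by rintro _ ⟨y, -, rfl⟩; exact y.2)
  have := closure_mono (SetLike.coe_subset_coe.2 hle) hz
  rwa [hY.closure_eq] at this

lemma mem_sub_closure' (Y : Submodule ℝ Z) (hY : IsClosed (Y : Set Z)) (s : Set Y) {z : Z}
    (hz : z ∈ (Submodule.span ℝ (Subtype.val '' s)).topologicalClosure) :
    (⟨z, mem_sub_Y Y hY s hz⟩ : Y) ∈ (Submodule.span ℝ s).topologicalClosure := by
  rw [← SetLike.mem_coe, Submodule.topologicalClosure_coe]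
  rw [closure_subtype]
  rw [sub_span_coe]
  rw [← SetLike.mem_coe, Submodule.topologicalClosure_coe] at hz
  exact hz

noncomputable def subCLE (Y : Submodule ℝ Z) (hY : IsClosed (Y : Set Z)) (s : Set Y) :
    (Submodule.span ℝ s).topologicalClosure ≃L[ℝ]
      (Submodule.span ℝ (Subtype.val '' s)).topologicalClosure :=
  ContinuousLinearEquiv.equivOfInverse
    (ContinuousLinearMap.mk
      { toFun := fun x => ⟨(x : Y), mem_sub_closure Y s x.2⟩
        map_add' := fun x y => Subtype.ext (by simp)
        map_smul' := fun c x => Subtype.ext (by simp) }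
      ((continuous_subtype_val.comp continuous_subtype_val).subtype_mk _))
    (ContinuousLinearMap.mk
      { toFun := fun z => ⟨⟨(z : Z), mem_sub_Y Y hY s z.2⟩, mem_sub_closure' Y hY s z.2⟩
        map_add' := fun x y => Subtype.ext (Subtype.ext (by simp))
        map_smul' := fun c x => Subtype.ext (Subtype.ext (by simp)) }
      ((continuous_subtype_val.subtype_mk _).subtype_mk _))
    (fun x => Subtype.ext (Subtype.ext rfl))
    (fun z => Subtype.ext rfl)

lemma subCLE_apply (Y : Submodule ℝ Z) (hY : IsClosed (Y : Set Z)) (s : Set Y)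
    (x : (Submodule.span ℝ s).topologicalClosure) :
    ((subCLE Y hY s x :
      (Submodule.span ℝ (Subtype.val '' s)).topologicalClosure) : Z) = ((x : Y) : Z) := rfl

end Sub

section Key

lemma spanClosureCongr {Z : Type*} [NormedAddCommGroup Z] [NormedSpace ℝ Z]
    {s t : Set Z} (h : s = t) :
    (Submodule.span ℝ s).topologicalClosure = (Submodule.span ℝ t).topologicalClosure := by
  rw [h]

lemma key_split {ι' : Type*} [Fintype ι'] (W : ι' → Type*)
    [∀ i, NormedAddCommGroup (W i)] [∀ i, NormedSpace ℝ (W i)]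
    {Z : Type*} [NormedAddCommGroup Z] [NormedSpace ℝ Z] [CompleteSpace Z]
    (w : ℕ → Z) (hw : IsUncondBasis w) (N : Set ℕ)
    (hsplit : SplittingFamily W)
    (hiso : Nonempty ((Submodule.span ℝ (w '' N)).topologicalClosure ≃L[ℝ] (∀ i, W i))) :
    ∃ S : ι' → Set ℕ, (∀ i, S i ⊆ N) ∧ Pairwise (Function.onFun Disjoint S) ∧
      (⋃ i, S i) = N ∧
      ∀ i, Nonempty ((Submodule.span ℝ (w '' S i)).topologicalClosure ≃L[ℝ] W i) := by
  classical
  obtain ⟨T⟩ := hiso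
  by_cases hNinf : N.Infinite
  · -- infinite case
    haveI := hNinf.to_subtype
    haveI : DecidablePred (· ∈ N) := Classical.decPred _
    haveI : Denumerable ↥N := Nat.Subtype.denumerable N
    set κ : ℕ ≃ ↥N := (Denumerable.eqv ↥N).symm with hκ
    set k : ℕ → ℕ := fun n => (κ n : ℕ) with hkdef
    have hk : Function.Injective k := fun a b hab => κ.injective (Subtype.ext hab)
    have hrange : Set.range k = N := by
      have h1 : Set.range k = Subtype.val '' (Set.range κ) := Set.range_comp _ _
      rw [h1, κ.surjective.range_eq, Set.image_univ, Subtype.range_coe]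
    -- transport T to the span over `range k`
    have Tk : (Submodule.span ℝ (w '' Set.range k)).topologicalClosure ≃L[ℝ] (∀ i, W i) :=
      (eqCLE (spanClosureCongr (by rw [hrange]))).trans T
    set E : ℕ → (Submodule.span ℝ (w '' Set.range k)).topologicalClosure := restr w k with hE
    have hEb : IsUncondBasis E := restrict_basis w hw k hk
    set f : ℕ → (∀ i, W i) := fun n => Tk (E n) with hf
    have hfb : IsUncondBasis f := basis_map Tk E hEb
    obtain ⟨M, hMdisj, hMcov, hMiso⟩ := hsplit f hfb
    refine ⟨fun i => k '' M i, fun i => ?_, ?_, ?_, ?_⟩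
    · rw [← hrange]
      exact Set.image_subset_range _ _
    · intro i i' hne
      exact (Set.disjoint_image_iff hk).2 (hMdisj hne)
    · rw [← Set.image_iUnion, hMcov, Set.image_univ, hrange]
    · intro i
      obtain ⟨Ti⟩ := hMiso i
      have h1 : Subtype.val '' (E '' M i) = w '' (k '' M i) := by
        rw [← Set.image_comp, ← Set.image_comp]
        rfl
      have h2 : (Tk : _ → _) '' (E '' M i) = f '' M i := by
        rw [← Set.image_comp]
        rfl
      refine ⟨((eqCLE (spanClosureCongr h1.symm)).trans
        ((subCLE _ (Submodule.isClosed_topologicalClosure _) (E '' M i)).symm.trans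
          ((spanCLE Tk (E '' M i)).trans
            ((eqCLE (spanClosureCongr h2)).trans Ti))))⟩
  · -- finite case
    have hNfin : N.Finite := Set.not_infinite.1 hNinf
    haveI : Fintype ↥N := hNfin.fintype
    haveI hYfd : FiniteDimensional ℝ (Submodule.span ℝ (w '' N)) :=
      FiniteDimensional.span_of_finite ℝ (hNfin.image w)
    have hclosed : IsClosed ((Submodule.span ℝ (w '' N)) : Set Z) :=
      Submodule.closed_of_finiteDimensional _
    have hYeq : (Submodule.span ℝ (w '' N)).topologicalClosure = Submodule.span ℝ (w '' N) :=
      hclosed.submodule_topologicalClosure_eq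
    have T' : (Submodule.span ℝ (w '' N)) ≃L[ℝ] (∀ i, W i) := (eqCLE hYeq.symm).trans T
    haveI : FiniteDimensional ℝ (∀ i, W i) := Module.Finite.equiv T'.toLinearEquiv
    haveI hWfd : ∀ i, FiniteDimensional ℝ (W i) := by
      intro i
      refine FiniteDimensional.of_surjective
        (LinearMap.proj i : (∀ i', W i') →ₗ[ℝ] W i) (fun v => ?_)
      exact ⟨Function.update 0 i v, Function.update_self i v 0⟩
    have hNcard : Module.finrank ℝ (Submodule.span ℝ (w '' N)) = Fintype.card ↥N := by
      have him : w '' N = Set.range (fun m : ↥N => w m.1) := Set.image_eq_range _ _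
      rw [him]
      exact finrank_span_eq_card ((linearIndependent w hw).comp Subtype.val Subtype.val_injective)
    have hcard : Fintype.card ↥N = ∑ i, Module.finrank ℝ (W i) := by
      rw [← hNcard, T'.toLinearEquiv.finrank_eq, Module.finrank_pi_fintype]
    have hcard2 : Fintype.card ↥N = Fintype.card (Σ i : ι', Fin (Module.finrank ℝ (W i))) := by
      rw [Fintype.card_sigma]
      simpa using hcard
    set σ2 : ↥N ≃ Σ i : ι', Fin (Module.finrank ℝ (W i)) := Fintype.equivOfCardEq hcard2 with hσ2
    set g : ∀ i : ι', Fin (Module.finrank ℝ (W i)) → ℕ :=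
      fun i t => ((σ2.symm ⟨i, t⟩ : ↥N) : ℕ) with hg
    have hginj : ∀ i, Function.Injective (g i) := by
      intro i t t' htt
      have h1 : σ2.symm ⟨i, t⟩ = σ2.symm ⟨i, t'⟩ := Subtype.ext htt
      have h2 := σ2.symm.injective h1
      injection h2 with h3 h4
    refine ⟨fun i => Set.range (g i), fun i => ?_, ?_, ?_, ?_⟩
    · rintro _ ⟨t, rfl⟩
      exact (σ2.symm ⟨i, t⟩).2
    · intro i i' hne
      rw [Function.onFun, Set.disjoint_left]
      rintro _ ⟨t, rfl⟩ ⟨t', ht'⟩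
      have h1 : σ2.symm ⟨i', t'⟩ = σ2.symm ⟨i, t⟩ := Subtype.ext ht'
      have h2 := σ2.symm.injective h1
      exact hne (congrArg Sigma.fst h2).symm
    · refine Set.Subset.antisymm (Set.iUnion_subset (fun i => ?_)) (fun m hm => ?_)
      · rintro _ ⟨t, rfl⟩
        exact (σ2.symm ⟨i, t⟩).2
      · have hp : (⟨(σ2 ⟨m, hm⟩).1, (σ2 ⟨m, hm⟩).2⟩ : Σ i : ι', Fin (Module.finrank ℝ (W i)))
            = σ2 ⟨m, hm⟩ := rfl
        refine Set.mem_iUnion.2 ⟨(σ2 ⟨m, hm⟩).1, ⟨(σ2 ⟨m, hm⟩).2, ?_⟩⟩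
        show ((σ2.symm ⟨(σ2 ⟨m, hm⟩).1, (σ2 ⟨m, hm⟩).2⟩ : ↥N) : ℕ) = m
        rw [hp, Equiv.symm_apply_apply]
    · intro i
      have hset : w '' Set.range (g i) = Set.range (w ∘ g i) := (Set.range_comp _ _).symm
      have hli : LinearIndependent ℝ (w ∘ g i) :=
        (linearIndependent w hw).comp (g i) (hginj i)
      haveI hfd1 : FiniteDimensional ℝ (Submodule.span ℝ (Set.range (w ∘ g i))) :=
        FiniteDimensional.span_of_finite ℝ (Set.finite_range _)
      haveI hfd2 : FiniteDimensional ℝ (Submodule.span ℝ (w '' Set.range (g i))) := by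
        rw [hset]
        exact hfd1
      have hfr : Module.finrank ℝ (Submodule.span ℝ (Set.range (w ∘ g i)))
          = Module.finrank ℝ (W i) := by
        rw [finrank_span_eq_card hli, Fintype.card_fin]
      obtain ⟨L⟩ := FiniteDimensional.nonempty_linearEquiv_of_finrank_eq hfr
      have hcl : (Submodule.span ℝ (w '' Set.range (g i))).topologicalClosure
          = Submodule.span ℝ (w '' Set.range (g i)) :=
        (Submodule.closed_of_finiteDimensional _).submodule_topologicalClosure_eq
      exact ⟨(eqCLE hcl).trans ((eqCLE (congrArg (Submodule.span ℝ) hset)).trans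
        L.toContinuousLinearEquiv)⟩

end Key


end UB

theorem statement17 {ι J : Type*} [Fintype ι] [Fintype J]
    (X : ι → Type*) [∀ i, NormedAddCommGroup (X i)] [∀ i, NormedSpace ℝ (X i)]
    [∀ i, CompleteSpace (X i)]
    (Ipart : J → Finset ι)
    (hdisj : Pairwise (Function.onFun Disjoint Ipart))
    (hcover : ∀ i, ∃ j, i ∈ Ipart j)
    (h1 : ∀ j, SplittingFamily (fun i : Ipart j => X i.1))
    (h2 : SplittingFamily (fun j : J => ∀ i : Ipart j, X i.1)) :
    SplittingFamily X := by
  classical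
  intro w hw
  have memJ : ∀ {i : ι} {j j' : J}, i ∈ Ipart j → i ∈ Ipart j' → j = j' := by
    intro i j j' hj hj'
    by_contra hne
    exact Finset.disjoint_left.1 (hdisj hne) hj hj'
  have hjof : ∀ i, i ∈ Ipart ((hcover i).choose) := fun i => (hcover i).choose_spec
  have hVl : ∀ x : (∀ i, X i),
      (fun y : (∀ j, ∀ i : Ipart j, X i.1) => fun i => y ((hcover i).choose) ⟨i, hjof i⟩)
        ((fun x : (∀ i, X i) => fun j => fun i : Ipart j => x i.1) x) = x :=
    fun x => funext fun i => rfl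
  have hVr : ∀ y : (∀ j, ∀ i : Ipart j, X i.1),
      (fun x : (∀ i, X i) => fun j => fun i : Ipart j => x i.1)
        ((fun y : (∀ j, ∀ i : Ipart j, X i.1) => fun i => y ((hcover i).choose) ⟨i, hjof i⟩) y)
        = y := by
    intro y
    funext j i
    obtain ⟨iv, hiv⟩ := i
    show y ((hcover iv).choose) ⟨iv, hjof iv⟩ = y j ⟨iv, hiv⟩
    have hj : (hcover iv).choose = j := memJ (hjof iv) hiv
    subst hj
    rfl
  set V : (∀ i, X i) ≃L[ℝ] (∀ j, ∀ i : Ipart j, X i.1) :=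
    ContinuousLinearEquiv.equivOfInverse
      (ContinuousLinearMap.mk
        { toFun := fun x => fun j => fun i : Ipart j => x i.1
          map_add' := fun x y => rfl
          map_smul' := fun c x => rfl }
        (continuous_pi fun j => continuous_pi fun i => continuous_apply i.1))
      (ContinuousLinearMap.mk
        { toFun := fun y => fun i => y ((hcover i).choose) ⟨i, hjof i⟩
          map_add' := fun x y => rfl
          map_smul' := fun c x => rfl }
        (continuous_pi fun i =>
          ((continuous_apply (⟨i, hjof i⟩ : Ipart ((hcover i).choose))).comp
            (continuous_apply ((hcover i).choose)))))
      hVl hVr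
    with hV
  have hw' : IsUncondBasis (fun n => V (w n)) := UB.basis_map V w hw
  obtain ⟨N, hNdisj, hNcov, hNiso⟩ := h2 (fun n => V (w n)) hw'
  have KEY : ∀ j, ∃ S : Ipart j → Set ℕ, (∀ i, S i ⊆ N j) ∧
      Pairwise (Function.onFun Disjoint S) ∧ (⋃ i, S i) = N j ∧
      ∀ i, Nonempty ((Submodule.span ℝ ((fun n => V (w n)) '' S i)).topologicalClosure
        ≃L[ℝ] X i.1) :=
    fun j => UB.key_split (fun i : Ipart j => X i.1) (fun n => V (w n)) hw' (N j)
      (h1 j) (hNiso j)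
  choose S hS1 hS2 hS3 hS4 using KEY
  have hdep : ∀ (i : ι) (j₁ j₂ : J) (e : j₁ = j₂) (h₁ : i ∈ Ipart j₁) (h₂ : i ∈ Ipart j₂),
      S j₁ ⟨i, h₁⟩ = S j₂ ⟨i, h₂⟩ := by
    rintro i j₁ j₂ rfl h₁ h₂
    rfl
  refine ⟨fun i => S ((hcover i).choose) ⟨i, hjof i⟩, ?_, ?_, ?_⟩
  · intro i i' hne
    simp only [Function.onFun]
    by_cases hjj : (hcover i).choose = (hcover i').choose
    · have hmem : i ∈ Ipart ((hcover i').choose) := by rw [← hjj]; exact hjof i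
      rw [hdep i _ _ hjj (hjof i) hmem]
      exact hS2 ((hcover i').choose) (fun hEq => hne (congrArg Subtype.val hEq))
    · exact (hNdisj hjj).mono (hS1 _ _) (hS1 _ _)
  · refine Set.eq_univ_iff_forall.2 (fun m => ?_)
    have hm1 : m ∈ ⋃ j, N j := by rw [hNcov]; trivial
    obtain ⟨j, hj⟩ := Set.mem_iUnion.1 hm1
    have hm2 : m ∈ ⋃ i : Ipart j, S j i := by rw [hS3 j]; exact hj
    obtain ⟨i0, hi0⟩ := Set.mem_iUnion.1 hm2
    refine Set.mem_iUnion.2 ⟨i0.1, ?_⟩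
    show m ∈ S ((hcover i0.1).choose) ⟨i0.1, hjof i0.1⟩
    rw [hdep i0.1 ((hcover i0.1).choose) j (memJ (hjof i0.1) i0.2) (hjof i0.1) i0.2]
    exact hi0
  · intro i
    have himg : (V : (∀ i, X i) → (∀ j, ∀ i : Ipart j, X i.1))
        '' (w '' (S ((hcover i).choose) ⟨i, hjof i⟩))
        = (fun n => V (w n)) '' (S ((hcover i).choose) ⟨i, hjof i⟩) := by
      rw [← Set.image_comp]
      rfl
    obtain ⟨Ti⟩ := hS4 ((hcover i).choose) ⟨i, hjof i⟩
    exact ⟨(UB.spanCLE V (w '' (S ((hcover i).choose) ⟨i, hjof i⟩))).trans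
      ((UB.eqCLE (UB.spanClosureCongr himg)).trans Ti)⟩
end
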